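/- arXiv:0812.5024 — 9 statements merged into one kernel-verified Lean document; each statement's English description precedes it below -/
import Mathlib

section
/- Under the hypotheses of the stability theorem for n-ring homomorphisms (f : A → B with ‖f(a+b)−f(a)−f(b)‖ ≤ ε and ‖f(a₁⋯aₙ) − f(a₁)⋯f(aₙ)‖ ≤ δ, h the associated n-ring homomorphism with ‖f−h‖ ≤ ε), for all a₁,…,aₙ ∈ A and every k ∈ {1,…,n−1} one has h(a₁)⋯h(a_k)·(f(a_{k+1})⋯f(aₙ) − h(a_{k+1})⋯h(aₙ)) = 0 and (f(a₁)⋯f(a_k) − h(a₁)⋯h(a_k))·h(a_{k+1})⋯h(aₙ) = 0. -/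
open Filter Topology

lemma prod_map_smul {R M : Type*} [Monoid M] [Monoid R] [MulAction R M]
    [SMulCommClass R M M] [IsScalarTower R M M] (c : R) :
    ∀ l : List M, (l.map (c • ·)).prod = c ^ l.length • l.prod
  | [] => by simp
  | x :: l => by
    rw [List.map_cons, List.prod_cons, List.prod_cons, prod_map_smul c l,
      smul_mul_smul_comm, List.length_cons, pow_succ']

lemma ofFn_cast {A : Type*} {n : ℕ} (l : List A) (hl : l.length = n) :
    List.ofFn (fun i : Fin n => l.get (Fin.cast hl.symm i)) = l := by
  apply List.ext_getElem <;> simp [hl]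

section
variable {A B : Type*} [Ring A] [NormedRing B] [NormedAlgebra ℝ B]

lemma h_zero {h : A → B} (hh : ∀ a b : A, h (a + b) = h a + h b) : h 0 = 0 := by
  have := hh 0 0; simpa using this.symm

lemma h_nsmul {h : A → B} (hh : ∀ a b : A, h (a + b) = h a + h b) (c : ℕ) (a : A) :
    h (c • a) = c • h a := by
  induction c with
  | zero => simpa using h_zero hh
  | succ k ih => rw [succ_nsmul, succ_nsmul, hh, ih]

lemma tendsto_prod_map {f h : A → B}
    (hlim : ∀ a : A, Tendsto (fun m : ℕ => ((2 : ℝ) ^ m)⁻¹ • f ((2 ^ m : ℕ) • a))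
      atTop (𝓝 (h a))) :
    ∀ l : List A,
      Tendsto (fun m : ℕ => (l.map (fun x => ((2 : ℝ) ^ m)⁻¹ • f ((2 ^ m : ℕ) • x))).prod)
        atTop (𝓝 ((l.map h).prod))
  | [] => by simpa using tendsto_const_nhds
  | x :: l => by
    simpa using (hlim x).mul (tendsto_prod_map hlim l)

-- bound sequence tends to 0
lemma aux_tendsto_zero (C : ℝ) :
    Tendsto (fun m : ℕ => ((2 : ℝ) ^ m)⁻¹ * C) atTop (𝓝 0) := by
  have h2 : Tendsto (fun m : ℕ => ((2 : ℝ)⁻¹) ^ m) atTop (𝓝 0) :=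
    tendsto_pow_atTop_nhds_zero_of_lt_one (by norm_num) (by norm_num)
  have := h2.mul_const C
  simpa [inv_pow] using this

end

set_option maxHeartbeats 1000000 in
lemma key {A B : Type*} [Ring A] [NormedRing B] [NormedAlgebra ℝ B]
    (n : ℕ) (ε δ : ℝ) (hε : 0 ≤ ε) (hδ : 0 ≤ δ) (f h : A → B)
    (hmul : ∀ a : Fin n → A,
      ‖f (List.ofFn a).prod - ((List.ofFn a).map f).prod‖ ≤ δ)
    (hlim : ∀ a : A, Tendsto (fun m : ℕ => ((2 : ℝ) ^ m)⁻¹ • f ((2 ^ m : ℕ) • a))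
      atTop (𝓝 (h a)))
    (hh : ∀ a b : A, h (a + b) = h a + h b)
    (hhom : ∀ a : Fin n → A, h (List.ofFn a).prod = ((List.ofFn a).map h).prod)
    (hbound : ∀ a : A, ‖f a - h a‖ ≤ ε)
    (l₁ l₂ : List A) (hlen : l₁.length + l₂.length = n) :
    (1 ≤ l₁.length → (l₁.map h).prod * ((l₂.map f).prod - (l₂.map h).prod) = 0) ∧
    (1 ≤ l₂.length → ((l₁.map f).prod - (l₁.map h).prod) * (l₂.map h).prod = 0) := by
  set Ph := (l₁.map h).prod with hPh
  set Qh := (l₂.map h).prod with hQh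
  set Pf := (l₁.map f).prod with hPf
  set Qf := (l₂.map f).prod with hQf
  -- h of the full product splits
  have hL0 : (l₁ ++ l₂).length = n := by simpa using hlen
  have hPQ : h (l₁.prod * l₂.prod) = Ph * Qh := by
    have := hhom (fun i => (l₁ ++ l₂).get (Fin.cast hL0.symm i))
    rw [ofFn_cast _ hL0] at this
    simpa [List.prod_append, List.map_append] using this
  have hr0 : ∀ m : ℕ, (0:ℝ) ≤ ((2:ℝ) ^ m)⁻¹ := fun m => by positivity
  have hr1 : ∀ m : ℕ, ((2:ℝ) ^ m)⁻¹ ≤ 1 := fun m => by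
    rw [inv_le_one_iff₀]; right; exact one_le_pow₀ (by norm_num)
  have hcancel : ∀ (m k : ℕ) (z : B),
      (((2:ℝ) ^ m)⁻¹) ^ k • (((2 ^ m : ℕ) ^ k) • z) = z := by
    intro m k z
    have h1 : (((2 ^ m : ℕ) ^ k) • z) = (((2:ℝ) ^ m) ^ k) • z := by
      rw [← Nat.cast_smul_eq_nsmul ℝ]; push_cast; ring_nf
    rw [h1, smul_smul, ← mul_pow, inv_mul_cancel₀ (by positivity), one_pow, one_smul]
  constructor
  · -- first identity: scale l₁
    intro hk
    set k := l₁.length with hkdef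
    set g : ℕ → B := fun m =>
      (l₁.map (fun x => ((2 : ℝ) ^ m)⁻¹ • f ((2 ^ m : ℕ) • x))).prod * Qf with hg
    have bound : ∀ m : ℕ, ‖g m - Ph * Qh‖ ≤ ((2:ℝ) ^ m)⁻¹ * (ε + δ) := by
      intro m
      set c : ℕ := 2 ^ m with hc
      set L : List A := l₁.map (c • ·) ++ l₂ with hLdef
      have hL : L.length = n := by simp [hLdef, hlen]; omega
      have step1 : ‖f L.prod - (L.map f).prod‖ ≤ δ := by
        have := hmul (fun i => L.get (Fin.cast hL.symm i))
        rwa [ofFn_cast _ hL] at this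
      have step2 : L.prod = c ^ k • (l₁.prod * l₂.prod) := by
        rw [hLdef, List.prod_append, prod_map_smul, smul_mul_assoc]
      have step3 : h L.prod = c ^ k • (Ph * Qh) := by
        rw [step2, h_nsmul hh, hPQ]
      have step4 : (L.map f).prod = (l₁.map (fun x => f (c • x))).prod * Qf := by
        simp [hLdef, List.map_append, List.prod_append, List.map_map, Function.comp_def, hQf]
      have key_bound : ‖c ^ k • (Ph * Qh) - (l₁.map (fun x => f (c • x))).prod * Qf‖
          ≤ ε + δ := by
        have heq : c ^ k • (Ph * Qh) - (l₁.map (fun x => f (c • x))).prod * Qf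
            = (h L.prod - f L.prod) + (f L.prod - (L.map f).prod) := by
          rw [← step3, ← step4, sub_add_sub_cancel]
        rw [heq]
        refine le_trans (norm_add_le _ _) (add_le_add ?_ step1)
        rw [norm_sub_rev]; exact hbound _
      have gfact : g m = (((2:ℝ) ^ m)⁻¹) ^ k •
          ((l₁.map (fun x => f (c • x))).prod * Qf) := by
        have : l₁.map (fun x => ((2 : ℝ) ^ m)⁻¹ • f ((2 ^ m : ℕ) • x))
            = (l₁.map (fun x => f (c • x))).map ((((2:ℝ) ^ m)⁻¹) • ·) := by
          simp [List.map_map, Function.comp_def, hc]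
        rw [hg]
        simp only [this, prod_map_smul, List.length_map, smul_mul_assoc, ← hkdef]
      have heq2 : g m - Ph * Qh = (((2:ℝ) ^ m)⁻¹) ^ k •
          ((l₁.map (fun x => f (c • x))).prod * Qf - (c ^ k) • (Ph * Qh)) := by
        rw [gfact, smul_sub, hcancel]
      rw [heq2, norm_smul, norm_sub_rev]
      have : ‖(((2:ℝ) ^ m)⁻¹) ^ k‖ = (((2:ℝ) ^ m)⁻¹) ^ k := by
        rw [Real.norm_eq_abs, abs_of_nonneg (pow_nonneg (hr0 m) k)]
      rw [this]
      calc (((2:ℝ) ^ m)⁻¹) ^ k * ‖c ^ k • (Ph * Qh) - (l₁.map (fun x => f (c • x))).prod * Qf‖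
          ≤ (((2:ℝ) ^ m)⁻¹) ^ k * (ε + δ) :=
            mul_le_mul_of_nonneg_left key_bound (pow_nonneg (hr0 m) k)
        _ ≤ ((2:ℝ) ^ m)⁻¹ * (ε + δ) := by
            refine mul_le_mul_of_nonneg_right ?_ (by linarith)
            calc (((2:ℝ) ^ m)⁻¹) ^ k ≤ (((2:ℝ) ^ m)⁻¹) ^ 1 :=
                pow_le_pow_of_le_one (hr0 m) (hr1 m) hk
              _ = ((2:ℝ) ^ m)⁻¹ := pow_one _
    have lim1 : Tendsto g atTop (𝓝 (Ph * Qh)) := by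
      rw [tendsto_iff_norm_sub_tendsto_zero]
      exact squeeze_zero (fun m => norm_nonneg _) bound (aux_tendsto_zero (ε + δ))
    have lim2 : Tendsto g atTop (𝓝 (Ph * Qf)) :=
      (tendsto_prod_map hlim l₁).mul_const Qf
    have := tendsto_nhds_unique lim1 lim2
    rw [mul_sub, sub_eq_zero]; exact this.symm
  · -- second identity: scale l₂
    intro hk
    set k := l₂.length with hkdef
    set g : ℕ → B := fun m =>
      Pf * (l₂.map (fun x => ((2 : ℝ) ^ m)⁻¹ • f ((2 ^ m : ℕ) • x))).prod with hg
    have bound : ∀ m : ℕ, ‖g m - Ph * Qh‖ ≤ ((2:ℝ) ^ m)⁻¹ * (ε + δ) := by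
      intro m
      set c : ℕ := 2 ^ m with hc
      set L : List A := l₁ ++ l₂.map (c • ·) with hLdef
      have hL : L.length = n := by simp [hLdef, hlen]; omega
      have step1 : ‖f L.prod - (L.map f).prod‖ ≤ δ := by
        have := hmul (fun i => L.get (Fin.cast hL.symm i))
        rwa [ofFn_cast _ hL] at this
      have step2 : L.prod = c ^ k • (l₁.prod * l₂.prod) := by
        rw [hLdef, List.prod_append, prod_map_smul, mul_smul_comm]
      have step3 : h L.prod = c ^ k • (Ph * Qh) := by
        rw [step2, h_nsmul hh, hPQ]
      have step4 : (L.map f).prod = Pf * (l₂.map (fun x => f (c • x))).prod := by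
        simp [hLdef, List.map_append, List.prod_append, List.map_map, Function.comp_def, hPf]
      have key_bound : ‖c ^ k • (Ph * Qh) - Pf * (l₂.map (fun x => f (c • x))).prod‖
          ≤ ε + δ := by
        have heq : c ^ k • (Ph * Qh) - Pf * (l₂.map (fun x => f (c • x))).prod
            = (h L.prod - f L.prod) + (f L.prod - (L.map f).prod) := by
          rw [← step3, ← step4, sub_add_sub_cancel]
        rw [heq]
        refine le_trans (norm_add_le _ _) (add_le_add ?_ step1)
        rw [norm_sub_rev]; exact hbound _
      have gfact : g m = (((2:ℝ) ^ m)⁻¹) ^ k •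
          (Pf * (l₂.map (fun x => f (c • x))).prod) := by
        have : l₂.map (fun x => ((2 : ℝ) ^ m)⁻¹ • f ((2 ^ m : ℕ) • x))
            = (l₂.map (fun x => f (c • x))).map ((((2:ℝ) ^ m)⁻¹) • ·) := by
          simp [List.map_map, Function.comp_def, hc]
        rw [hg]
        simp only [this, prod_map_smul, List.length_map, mul_smul_comm, ← hkdef]
      have heq2 : g m - Ph * Qh = (((2:ℝ) ^ m)⁻¹) ^ k •
          (Pf * (l₂.map (fun x => f (c • x))).prod - (c ^ k) • (Ph * Qh)) := by
        rw [gfact, smul_sub, hcancel]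
      rw [heq2, norm_smul, norm_sub_rev]
      have : ‖(((2:ℝ) ^ m)⁻¹) ^ k‖ = (((2:ℝ) ^ m)⁻¹) ^ k := by
        rw [Real.norm_eq_abs, abs_of_nonneg (pow_nonneg (hr0 m) k)]
      rw [this]
      calc (((2:ℝ) ^ m)⁻¹) ^ k * ‖c ^ k • (Ph * Qh) - Pf * (l₂.map (fun x => f (c • x))).prod‖
          ≤ (((2:ℝ) ^ m)⁻¹) ^ k * (ε + δ) :=
            mul_le_mul_of_nonneg_left key_bound (pow_nonneg (hr0 m) k)
        _ ≤ ((2:ℝ) ^ m)⁻¹ * (ε + δ) := by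
            refine mul_le_mul_of_nonneg_right ?_ (by linarith)
            calc (((2:ℝ) ^ m)⁻¹) ^ k ≤ (((2:ℝ) ^ m)⁻¹) ^ 1 :=
                pow_le_pow_of_le_one (hr0 m) (hr1 m) hk
              _ = ((2:ℝ) ^ m)⁻¹ := pow_one _
    have lim1 : Tendsto g atTop (𝓝 (Ph * Qh)) := by
      rw [tendsto_iff_norm_sub_tendsto_zero]
      exact squeeze_zero (fun m => norm_nonneg _) bound (aux_tendsto_zero (ε + δ))
    have lim2 : Tendsto g atTop (𝓝 (Pf * Qh)) :=
      (tendsto_prod_map hlim l₂).const_mul Pf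
    have := tendsto_nhds_unique lim1 lim2
    rw [sub_mul, sub_eq_zero]; exact this.symm

/-- Identity (2.4) of Theorem 2.1. -/
theorem stmt_1 {A B : Type*} [Ring A] [NormedRing B] [NormedAlgebra ℝ B]
    [CompleteSpace B]
    (n : ℕ) (hn : 2 ≤ n) (ε δ : ℝ) (hε : 0 ≤ ε) (hδ : 0 ≤ δ) (f h : A → B)
    (hadd : ∀ a b : A, ‖f (a + b) - f a - f b‖ ≤ ε)
    (hmul : ∀ a : Fin n → A,
      ‖f (List.ofFn a).prod - ((List.ofFn a).map f).prod‖ ≤ δ)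
    (hlim : ∀ a : A, Tendsto (fun m : ℕ => ((2 : ℝ) ^ m)⁻¹ • f ((2 ^ m : ℕ) • a))
      atTop (𝓝 (h a)))
    (hh : ∀ a b : A, h (a + b) = h a + h b)
    (hhom : ∀ a : Fin n → A, h (List.ofFn a).prod = ((List.ofFn a).map h).prod)
    (hbound : ∀ a : A, ‖f a - h a‖ ≤ ε) :
    ∀ (a : Fin n → A) (k : ℕ), 1 ≤ k → k ≤ n - 1 →
      (((List.ofFn a).take k).map h).prod *
          ((((List.ofFn a).drop k).map f).prod - (((List.ofFn a).drop k).map h).prod) = 0 ∧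
      ((((List.ofFn a).take k).map f).prod - (((List.ofFn a).take k).map h).prod) *
          (((List.ofFn a).drop k).map h).prod = 0 := by
  intro a k hk1 hk2
  have hlen : ((List.ofFn a).take k).length + ((List.ofFn a).drop k).length = n := by
    simp; omega
  have hkey := key n ε δ hε hδ f h hmul hlim hh hhom hbound
    ((List.ofFn a).take k) ((List.ofFn a).drop k) hlen
  refine ⟨hkey.1 ?_, hkey.2 ?_⟩ <;> simp <;> omega
end

section
/- Let A be a ring, B a Banach algebra, and suppose f : A → B satisfies ‖f(a+b)−f(a)−f(b)‖ ≤ ε and ‖f(a₁⋯aₙ) − f(a₁)⋯f(aₙ)‖ ≤ δ for all elements of A. Let h(a) = limₘ 2^{−m} f(2^m a). Then h(a₁a₂⋯aₙ) = h(a₁)·f(a₂)⋯f(aₙ) for all a₁,…,aₙ ∈ A. -/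
open Filter Topology

/-- Intermediate identity (2.5): h(a₁⋯aₙ) = h(a₁)·f(a₂)⋯f(aₙ). -/
theorem stmt_2 {A B : Type*} [Ring A] [NormedRing B] [NormedAlgebra ℝ B]
    [CompleteSpace B]
    (n : ℕ) (hn : 2 ≤ n) (ε δ : ℝ) (hε : 0 ≤ ε) (hδ : 0 ≤ δ) (f h : A → B)
    (hadd : ∀ a b : A, ‖f (a + b) - f a - f b‖ ≤ ε)
    (hmul : ∀ a : Fin n → A,
      ‖f (List.ofFn a).prod - ((List.ofFn a).map f).prod‖ ≤ δ)
    (hlim : ∀ a : A, Tendsto (fun m : ℕ => ((2 : ℝ) ^ m)⁻¹ • f ((2 ^ m : ℕ) • a))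
      atTop (𝓝 (h a))) :
    ∀ a : Fin n → A,
      h (List.ofFn a).prod
        = h (a ⟨0, by omega⟩) * (((List.ofFn a).drop 1).map f).prod := by
  intro a
  obtain ⟨k, rfl⟩ : ∃ k, n = k + 2 := ⟨n - 2, by omega⟩
  set L : List A := List.ofFn (fun i : Fin (k + 1) => a i.succ) with hL
  have hofn : List.ofFn a = a 0 :: L := by
    rw [List.ofFn_succ]
  have hdrop : ((List.ofFn a).drop 1).map f = L.map f := by rw [hofn, List.drop_succ_cons, List.drop_zero]
  set P : B := (L.map f).prod with hP
  have key : ∀ m : ℕ, ‖((2 : ℝ) ^ m)⁻¹ • f ((2 ^ m : ℕ) • (List.ofFn a).prod)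
      - (((2 : ℝ) ^ m)⁻¹ • f ((2 ^ m : ℕ) • a 0)) * P‖ ≤ ((2 : ℝ) ^ m)⁻¹ * δ := by
    intro m
    have hb := hmul (Function.update a 0 ((2 ^ m : ℕ) • a 0))
    have h1 : List.ofFn (Function.update a 0 ((2 ^ m : ℕ) • a 0))
        = ((2 ^ m : ℕ) • a 0) :: L := by
      rw [List.ofFn_succ, Function.update_self]
      have heq : (fun i : Fin (k + 1) => Function.update a 0 ((2 ^ m : ℕ) • a 0) i.succ)
          = fun i => a i.succ := by
        funext i
        exact Function.update_of_ne (Fin.succ_ne_zero i) _ _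
      rw [heq, hL]
    rw [h1] at hb
    have h2 : (((2 ^ m : ℕ) • a 0) :: L).prod = (2 ^ m : ℕ) • (List.ofFn a).prod := by
      rw [hofn, List.prod_cons, List.prod_cons, smul_mul_assoc]
    rw [h2, List.map_cons, List.prod_cons, ← hP] at hb
    have h3 : ((2 : ℝ) ^ m)⁻¹ • f ((2 ^ m : ℕ) • (List.ofFn a).prod)
        - (((2 : ℝ) ^ m)⁻¹ • f ((2 ^ m : ℕ) • a 0)) * P
        = ((2 : ℝ) ^ m)⁻¹ • (f ((2 ^ m : ℕ) • (List.ofFn a).prod)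
            - f ((2 ^ m : ℕ) • a 0) * P) := by
      rw [smul_sub, smul_mul_assoc]
    rw [h3, norm_smul]
    have : ‖((2 : ℝ) ^ m)⁻¹‖ = ((2 : ℝ) ^ m)⁻¹ := by
      rw [Real.norm_eq_abs, abs_of_pos (by positivity)]
    rw [this]
    exact mul_le_mul_of_nonneg_left hb (by positivity)
  have hbound : Tendsto (fun m : ℕ => ((2 : ℝ) ^ m)⁻¹ * δ) atTop (𝓝 0) := by
    have : Tendsto (fun m : ℕ => ((2 : ℝ)⁻¹) ^ m) atTop (𝓝 0) :=
      tendsto_pow_atTop_nhds_zero_of_lt_one (by norm_num) (by norm_num)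
    have := this.mul_const δ
    simpa [inv_pow] using this
  have hzero : Tendsto (fun m : ℕ => ((2 : ℝ) ^ m)⁻¹ • f ((2 ^ m : ℕ) • (List.ofFn a).prod)
      - (((2 : ℝ) ^ m)⁻¹ • f ((2 ^ m : ℕ) • a 0)) * P) atTop (𝓝 0) :=
    squeeze_zero_norm key hbound
  have hlim2 : Tendsto (fun m : ℕ => ((2 : ℝ) ^ m)⁻¹ • f ((2 ^ m : ℕ) • (List.ofFn a).prod)
      - (((2 : ℝ) ^ m)⁻¹ • f ((2 ^ m : ℕ) • a 0)) * P) atTop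
      (𝓝 (h (List.ofFn a).prod - h (a 0) * P)) :=
    (hlim (List.ofFn a).prod).sub ((hlim (a 0)).mul_const P)
  have := tendsto_nhds_unique hlim2 hzero
  have h0 : h (List.ofFn a).prod = h (a 0) * P := by
    rwa [sub_eq_zero] at this
  rw [hdrop, ← hP]
  exact h0
end

section
/- Let A be a ring, B a Banach algebra, and f : A → B satisfy ‖f(a+b)−f(a)−f(b)‖ ≤ ε and ‖f(a₁⋯aₙ) − f(a₁)⋯f(aₙ)‖ ≤ δ. Let h(a) = limₘ 2^{−m} f(2^m a). Then for every k ∈ {1,…,n−1} and all a₁,…,aₙ ∈ A, h(a₁)⋯h(a_k)·f(a_{k+1})⋯f(aₙ) = h(a₁a₂⋯aₙ). -/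
open Filter Topology

private lemma list_prod_map_smul {R M : Type*} [Monoid R] [Monoid M] [MulAction R M]
    [SMulCommClass R M M] [IsScalarTower R M M] (c : R) (l : List M) :
    (l.map (fun x => c • x)).prod = c ^ l.length • l.prod := by
  induction l with
  | nil => simp
  | cons x l ih =>
      simp only [List.map_cons, List.prod_cons, List.length_cons, ih,
        smul_mul_smul_comm, pow_succ']

private lemma list_ofFn_get_cast {α : Type*} {n : ℕ} (l : List α) (hl : l.length = n) :
    List.ofFn (fun i : Fin n => l.get (Fin.cast hl.symm i)) = l := by
  subst hl
  simpa using List.ofFn_get l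

/-- Mixed identity (2.6): h(a₁)⋯h(a_k)·f(a_{k+1})⋯f(aₙ) = h(a₁⋯aₙ). -/
theorem stmt_3 {A B : Type*} [Ring A] [NormedRing B] [NormedAlgebra ℝ B]
    [CompleteSpace B]
    (n : ℕ) (hn : 2 ≤ n) (ε δ : ℝ) (hε : 0 ≤ ε) (hδ : 0 ≤ δ) (f h : A → B)
    (hadd : ∀ a b : A, ‖f (a + b) - f a - f b‖ ≤ ε)
    (hmul : ∀ a : Fin n → A,
      ‖f (List.ofFn a).prod - ((List.ofFn a).map f).prod‖ ≤ δ)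
    (hlim : ∀ a : A, Tendsto (fun m : ℕ => ((2 : ℝ) ^ m)⁻¹ • f ((2 ^ m : ℕ) • a))
      atTop (𝓝 (h a))) :
    ∀ (a : Fin n → A) (k : ℕ), 1 ≤ k → k ≤ n - 1 →
      (((List.ofFn a).take k).map h).prod * (((List.ofFn a).drop k).map f).prod
        = h (List.ofFn a).prod := by
  intro a k hk1 hkn
  set L : List A := List.ofFn a with hLdef
  have hlen : L.length = n := by simp [hLdef]
  have hklt : k < n := by omega
  have hktake : (L.take k).length = k := by
    rw [List.length_take, hlen]; omega
  set p : A := L.prod with hp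
  set T : B := ((L.drop k).map f).prod with hT
  -- the modified list with first k entries scaled by 2^m
  set M : ℕ → List A := fun m => ((L.take k).map (fun x => (2 ^ m : ℕ) • x)) ++ L.drop k
    with hM
  have hMlen : ∀ m, (M m).length = n := by
    intro m
    simp only [hM, List.length_append, List.length_map, hktake, List.length_drop, hlen]
    omega
  have hMprod : ∀ m, (M m).prod = (2 ^ (k * m) : ℕ) • p := by
    intro m
    rw [hM]
    rw [List.prod_append, list_prod_map_smul, hktake, smul_mul_assoc,
      List.prod_take_mul_prod_drop]
    rw [← pow_mul, Nat.mul_comm m k]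
  have hMmapf : ∀ m, ((M m).map f).prod
      = ((L.take k).map (fun x => f ((2 ^ m : ℕ) • x))).prod * T := by
    intro m
    rw [hM]
    simp [List.map_append, List.prod_append, List.map_map, Function.comp_def, hT]
  have hbound : ∀ m, ‖f ((2 ^ (k * m) : ℕ) • p) - ((M m).map f).prod‖ ≤ δ := by
    intro m
    have := hmul (fun i : Fin n => (M m).get (Fin.cast (hMlen m).symm i))
    rwa [list_ofFn_get_cast (M m) (hMlen m), hMprod] at this
  set u : ℕ → B := fun m =>
    ((L.take k).map (fun x => ((2 : ℝ) ^ m)⁻¹ • f ((2 ^ m : ℕ) • x))).prod * T with hu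
  set v : ℕ → B := fun m => ((2 : ℝ) ^ (k * m))⁻¹ • f ((2 ^ (k * m) : ℕ) • p) with hv
  have hu_eq : ∀ m, u m = ((2 : ℝ) ^ (k * m))⁻¹ • ((M m).map f).prod := by
    intro m
    have h1 : (L.take k).map (fun x => ((2 : ℝ) ^ m)⁻¹ • f ((2 ^ m : ℕ) • x))
        = ((L.take k).map (fun x => f ((2 ^ m : ℕ) • x))).map
            (fun y => ((2 : ℝ) ^ m)⁻¹ • y) := by
      rw [List.map_map]; rfl
    simp only [hu]
    rw [h1, list_prod_map_smul, List.length_map, hktake, hMmapf, smul_mul_assoc,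
      ← inv_pow, ← pow_mul, Nat.mul_comm m k, inv_pow]
  have hsub : ∀ m, ‖v m - u m‖ ≤ ((2 : ℝ) ^ (k * m))⁻¹ * δ := by
    intro m
    rw [hu_eq]
    simp only [hv]
    rw [← smul_sub, norm_smul, Real.norm_eq_abs,
      abs_of_nonneg (by positivity)]
    exact mul_le_mul_of_nonneg_left (hbound m) (by positivity)
  have hkm : Tendsto (fun m : ℕ => k * m) atTop atTop :=
    tendsto_atTop_mono (fun m => Nat.le_mul_of_pos_left m (by omega)) tendsto_id
  have hvlim : Tendsto v atTop (𝓝 (h p)) := (hlim p).comp hkm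
  have hbnd0 : Tendsto (fun m : ℕ => ((2 : ℝ) ^ (k * m))⁻¹ * δ) atTop (𝓝 0) := by
    have h2 : Tendsto (fun j : ℕ => ((2 : ℝ)⁻¹) ^ j) atTop (𝓝 0) :=
      tendsto_pow_atTop_nhds_zero_of_lt_one (by norm_num) (by norm_num)
    have := ((h2.comp hkm).mul_const δ)
    simpa [inv_pow, Function.comp] using this
  have hdiff0 : Tendsto (fun m => v m - u m) atTop (𝓝 0) :=
    squeeze_zero_norm hsub hbnd0
  have hulim : Tendsto u atTop (𝓝 (h p)) := by
    have := hvlim.sub hdiff0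
    simpa using this
  have hulim' : Tendsto u atTop (𝓝 (((L.take k).map h).prod * T)) := by
    apply Tendsto.mul _ tendsto_const_nhds
    exact tendsto_list_prod (L.take k) (fun x _ => hlim x)
  exact tendsto_nhds_unique hulim' hulim
end

section
/- Let A be a normed algebra, B a Banach algebra, ε, δ ≥ 0, and p, q real numbers with either p, q < 1 or p, q > 1. If f : A → B satisfies ‖f(a+b)−f(a)−f(b)‖ ≤ ε(‖a‖^p + ‖b‖^p) and ‖f(a₁⋯aₙ) − f(a₁)⋯f(aₙ)‖ ≤ δ·‖a₁‖^q⋯‖aₙ‖^q for all elements, then there exist a unique n-ring homomorphism h : A → B and a constant k > 0 with ‖f(a) − h(a)‖ ≤ kε‖a‖^p for all a ∈ A. -/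
open Filter Topology

private lemma hur_pow_rpow (c : ℝ) (hc : 0 ≤ c) (p : ℝ) (m : ℕ) :
    ((c ^ m : ℝ)) ^ p = (c ^ p) ^ m := by
  rw [← Real.rpow_natCast c m, ← Real.rpow_mul hc, mul_comm, Real.rpow_mul hc, Real.rpow_natCast]

private lemma hur_smul_list_prod {B : Type*} [NormedRing B] [NormedAlgebra ℝ B]
    (l : List B) (t : ℝ) :
    (l.map (fun x => t • x)).prod = t ^ l.length • l.prod := by
  induction l with
  | nil => simp
  | cons x l ih => simp [ih, smul_mul_smul_comm, pow_succ', mul_smul, smul_comm t]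

private lemma hur_aux {A B : Type*} [NormedRing A] [NormedAlgebra ℝ A]
    [NormedRing B] [NormedAlgebra ℝ B] [CompleteSpace B]
    (n : ℕ) (hn : 2 ≤ n) (ε δ : ℝ) (hδ : 0 ≤ δ) (p q : ℝ) (f : A → B)
    (hadd : ∀ a b : A, ‖f (a + b) - f a - f b‖ ≤ ε * (‖a‖ ^ p + ‖b‖ ^ p))
    (hmul : ∀ a : Fin n → A,
      ‖f (List.ofFn a).prod - ((List.ofFn a).map f).prod‖ ≤ δ * ∏ i : Fin n, ‖a i‖ ^ q)
    (c C : ℝ) (hc : 0 < c) (hC : 0 < C)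
    (hr : c ^ p < c) (hs : c ^ q < c)
    (hkey : ∀ a : A, ‖c⁻¹ • f (c • a) - f a‖ ≤ ε * C * ‖a‖ ^ p)
    (hscal : ∀ g : A → B, (∀ a b, g (a + b) = g a + g b) → ∀ x : A, g (c • x) = c • g x) :
    ∃! h : A → B, (∀ a b : A, h (a + b) = h a + h b) ∧
      (∀ a : Fin n → A, h (List.ofFn a).prod = ((List.ofFn a).map h).prod) ∧
      ∃ k : ℝ, 0 < k ∧ ∀ a : A, ‖f a - h a‖ ≤ k * ε * ‖a‖ ^ p := by
  have npos : 0 < n := by omega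
  set r : ℝ := c ^ p / c with hrdef
  set s : ℝ := c ^ q / c with hsdef
  have hr0 : 0 ≤ r := div_nonneg (Real.rpow_nonneg hc.le p) hc.le
  have hr1 : r < 1 := (div_lt_one hc).2 hr
  have hs0 : 0 ≤ s := div_nonneg (Real.rpow_nonneg hc.le q) hc.le
  have hs1 : s < 1 := (div_lt_one hc).2 hs
  -- norm of scalar multiples
  have hnsA : ∀ (m : ℕ) (a : A), ‖(c ^ m : ℝ) • a‖ = c ^ m * ‖a‖ := fun m a => by
    rw [norm_smul, Real.norm_of_nonneg (pow_nonneg hc.le m)]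
  have hnsB : ∀ (t : ℝ) (x : B), 0 ≤ t → ‖t • x‖ = t * ‖x‖ := fun t x ht => by
    rw [norm_smul, Real.norm_of_nonneg ht]
  have hpowp : ∀ (m : ℕ) (a : A), ‖(c ^ m : ℝ) • a‖ ^ p = (c ^ p) ^ m * ‖a‖ ^ p := fun m a => by
    rw [hnsA, Real.mul_rpow (pow_nonneg hc.le m) (norm_nonneg a), hur_pow_rpow c hc.le]
  have hpowq : ∀ (m : ℕ) (a : A), ‖(c ^ m : ℝ) • a‖ ^ q = (c ^ q) ^ m * ‖a‖ ^ q := fun m a => by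
    rw [hnsA, Real.mul_rpow (pow_nonneg hc.le m) (norm_nonneg a), hur_pow_rpow c hc.le]
  have cpow_pos : ∀ m : ℕ, (0:ℝ) < c ^ m := fun m => pow_pos hc m
  -- the approximating sequence
  set u : ℕ → A → B := fun m a => ((c : ℝ) ^ m)⁻¹ • f ((c : ℝ) ^ m • a) with hu
  have tgeo : ∀ K : ℝ, Tendsto (fun m : ℕ => K * r ^ m) atTop (𝓝 0) := fun K => by
    simpa using (tendsto_pow_atTop_nhds_zero_of_lt_one hr0 hr1).const_mul K
  -- step estimate
  have step : ∀ (a : A) (m : ℕ), dist (u m a) (u (m + 1) a) ≤ (ε * C * ‖a‖ ^ p) * r ^ m := by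
    intro a m
    have e : u m a - u (m + 1) a =
        ((c : ℝ) ^ m)⁻¹ • (f ((c : ℝ) ^ m • a) - c⁻¹ • f (c • ((c : ℝ) ^ m • a))) := by
      simp only [hu, pow_succ, mul_inv, mul_smul, smul_sub]
      rw [smul_comm ((c:ℝ)^m) c]
    rw [dist_eq_norm, e, hnsB _ _ (inv_nonneg.2 (cpow_pos m).le)]
    have h1 : ‖f ((c : ℝ) ^ m • a) - c⁻¹ • f (c • ((c : ℝ) ^ m • a))‖
        ≤ ε * C * ‖(c : ℝ) ^ m • a‖ ^ p := by
      rw [norm_sub_rev]; exact hkey _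
    calc ((c:ℝ) ^ m)⁻¹ * ‖f ((c : ℝ) ^ m • a) - c⁻¹ • f (c • ((c : ℝ) ^ m • a))‖
        ≤ ((c:ℝ) ^ m)⁻¹ * (ε * C * ‖(c : ℝ) ^ m • a‖ ^ p) := by
          exact mul_le_mul_of_nonneg_left h1 (inv_nonneg.2 (cpow_pos m).le)
      _ = (ε * C * ‖a‖ ^ p) * r ^ m := by
          rw [hpowp, hrdef, div_pow]; field_simp
  have hcau : ∀ a : A, CauchySeq fun m => u m a := fun a =>
    cauchySeq_of_le_geometric r _ hr1 (step a)
  have hlim : ∀ a : A, ∃ b : B, Tendsto (fun m => u m a) atTop (𝓝 b) := fun a =>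
    cauchySeq_tendsto_of_complete (hcau a)
  choose h hh using hlim
  have hk : 0 < C / (1 - r) := div_pos hC (by linarith)
  -- distance estimate
  have hbound : ∀ a : A, ‖f a - h a‖ ≤ (C / (1 - r)) * ε * ‖a‖ ^ p := by
    intro a
    have := dist_le_of_le_geometric_of_tendsto₀ r (ε * C * ‖a‖ ^ p) hr1 (step a) (hh a)
    have hu0 : u 0 a = f a := by simp [hu]
    rw [hu0, dist_eq_norm] at this
    calc ‖f a - h a‖ ≤ (ε * C * ‖a‖ ^ p) / (1 - r) := this
      _ = (C / (1 - r)) * ε * ‖a‖ ^ p := by ring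
  -- additivity
  have hA : ∀ a b : A, h (a + b) = h a + h b := by
    intro a b
    have t1 : Tendsto (fun m => u m (a + b) - u m a - u m b) atTop
        (𝓝 (h (a + b) - h a - h b)) := ((hh _).sub (hh _)).sub (hh _)
    have bnd : ∀ m : ℕ, ‖u m (a + b) - u m a - u m b‖
        ≤ (ε * (‖a‖ ^ p + ‖b‖ ^ p)) * r ^ m := by
      intro m
      have e : u m (a + b) - u m a - u m b = ((c:ℝ) ^ m)⁻¹ •
          (f ((c:ℝ) ^ m • a + (c:ℝ) ^ m • b) - f ((c:ℝ) ^ m • a) - f ((c:ℝ) ^ m • b)) := by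
        simp only [hu, smul_add, smul_sub]
      rw [e, hnsB _ _ (inv_nonneg.2 (cpow_pos m).le)]
      calc ((c:ℝ) ^ m)⁻¹ * ‖f ((c:ℝ) ^ m • a + (c:ℝ) ^ m • b) - f ((c:ℝ) ^ m • a) -
            f ((c:ℝ) ^ m • b)‖
          ≤ ((c:ℝ) ^ m)⁻¹ * (ε * (‖(c:ℝ) ^ m • a‖ ^ p + ‖(c:ℝ) ^ m • b‖ ^ p)) :=
            mul_le_mul_of_nonneg_left (hadd _ _) (inv_nonneg.2 (cpow_pos m).le)
        _ = (ε * (‖a‖ ^ p + ‖b‖ ^ p)) * r ^ m := by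
            rw [hpowp, hpowp, hrdef, div_pow]; field_simp
    have t2 : Tendsto (fun m => u m (a + b) - u m a - u m b) atTop (𝓝 0) :=
      squeeze_zero_norm bnd (tgeo _)
    have := tendsto_nhds_unique t1 t2
    have h0 : h (a + b) - h a - h b = 0 := this
    rwa [sub_sub, sub_eq_zero] at h0
  -- multiplicativity
  have hM : ∀ a : Fin n → A, h (List.ofFn a).prod = ((List.ofFn a).map h).prod := by
    intro a
    set P : A := (List.ofFn a).prod with hP
    have hnm : Tendsto (fun m : ℕ => n * m) atTop atTop :=
      tendsto_atTop_mono (fun m => Nat.le_mul_of_pos_left m npos) tendsto_id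
    have t_sub : Tendsto (fun m => u (n * m) P) atTop (𝓝 (h P)) := (hh P).comp hnm
    have t_prod : Tendsto (fun m => (List.ofFn fun i => u m (a i)).prod) atTop
        (𝓝 ((List.ofFn fun i => h (a i)).prod)) := by
      have := tendsto_list_prod (M := B) (f := fun (i : Fin n) (m : ℕ) => u m (a i))
        (x := atTop) (a := fun i => h (a i)) (List.finRange n) (fun i _ => hh (a i))
      simpa only [← List.ofFn_eq_map] using this
    have bnd : ∀ m : ℕ, ‖u (n * m) P - (List.ofFn fun i => u m (a i)).prod‖
        ≤ (δ * ∏ i : Fin n, ‖a i‖ ^ q) * ((c ^ q / c) ^ n) ^ m := by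
      intro m
      set t : ℝ := (c : ℝ) ^ m with ht
      have hM1 : (List.ofFn fun i => t • a i) = (List.ofFn a).map (fun x => t • x) := by
        rw [List.map_ofFn]; rfl
      have hM2 : (List.ofFn fun i => t • a i).prod = t ^ n • P := by
        rw [hM1, hur_smul_list_prod, List.length_ofFn, hP]
      have hM3 : (List.ofFn fun i => u m (a i)).prod
          = (t ^ n)⁻¹ • ((List.ofFn fun i => t • a i).map f).prod := by
        have e1 : (List.ofFn fun i => u m (a i))
            = (List.ofFn fun i => f (t • a i)).map (fun x => t⁻¹ • x) := by
          rw [List.map_ofFn]; rfl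
        have e2 : ((List.ofFn fun i => t • a i).map f) = (List.ofFn fun i => f (t • a i)) := by
          rw [List.map_ofFn]; rfl
        rw [e1, hur_smul_list_prod, List.length_ofFn, e2, inv_pow]
      have e : u (n * m) P - (List.ofFn fun i => u m (a i)).prod
          = (t ^ n)⁻¹ • (f ((List.ofFn fun i => t • a i).prod)
              - ((List.ofFn fun i => t • a i).map f).prod) := by
        rw [smul_sub, ← hM3]
        congr 1
        simp only [hu, ht, ← pow_mul, Nat.mul_comm n m, hM2, ht, ← pow_mul]
        rw [← ht, hM2, ht, ← pow_mul]
      have tn_pos : (0:ℝ) < t ^ n := pow_pos (cpow_pos m) n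
      rw [e, hnsB _ _ (inv_nonneg.2 tn_pos.le)]
      have h1 := hmul (fun i => t • a i)
      have h2 : (∏ i : Fin n, ‖t • a i‖ ^ q) = ((c ^ q) ^ m) ^ n * ∏ i : Fin n, ‖a i‖ ^ q := by
        calc (∏ i : Fin n, ‖t • a i‖ ^ q) = ∏ i : Fin n, ((c ^ q) ^ m * ‖a i‖ ^ q) := by
              refine Finset.prod_congr rfl fun i _ => ?_
              rw [ht, hpowq]
          _ = ((c ^ q) ^ m) ^ n * ∏ i : Fin n, ‖a i‖ ^ q := by
              rw [Finset.prod_mul_distrib, Finset.prod_const, Finset.card_univ, Fintype.card_fin]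
      calc (t ^ n)⁻¹ * ‖f ((List.ofFn fun i => t • a i).prod)
            - ((List.ofFn fun i => t • a i).map f).prod‖
          ≤ (t ^ n)⁻¹ * (δ * ∏ i : Fin n, ‖t • a i‖ ^ q) :=
            mul_le_mul_of_nonneg_left h1 (inv_nonneg.2 tn_pos.le)
        _ = (δ * ∏ i : Fin n, ‖a i‖ ^ q) * ((c ^ q / c) ^ n) ^ m := by
            have e2 : ((c ^ q / c) ^ n) ^ m
                = (((c:ℝ) ^ m) ^ n)⁻¹ * ((c ^ q) ^ m) ^ n := by
              rw [pow_right_comm, div_pow, div_pow, div_eq_inv_mul]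
            rw [h2, ht, e2]
            ring
    have sn0 : (0:ℝ) ≤ (c ^ q / c) ^ n := pow_nonneg hs0 n
    have sn1 : (c ^ q / c) ^ n < 1 := pow_lt_one₀ hs0 hs1 npos.ne'
    have tz : Tendsto (fun m : ℕ => (δ * ∏ i : Fin n, ‖a i‖ ^ q) * ((c ^ q / c) ^ n) ^ m)
        atTop (𝓝 0) := by
      simpa using (tendsto_pow_atTop_nhds_zero_of_lt_one sn0 sn1).const_mul
        (δ * ∏ i : Fin n, ‖a i‖ ^ q)
    have t3 : Tendsto (fun m => u (n * m) P - (List.ofFn fun i => u m (a i)).prod) atTop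
        (𝓝 0) := squeeze_zero_norm bnd tz
    have t4 : Tendsto (fun m => u (n * m) P) atTop (𝓝 ((List.ofFn fun i => h (a i)).prod)) := by
      have := t3.add t_prod
      simpa using this
    have := tendsto_nhds_unique t_sub t4
    rw [hP] at this
    rw [this, List.map_ofFn]
    rfl
  refine ⟨h, ⟨hA, hM, C / (1 - r), hk, hbound⟩, ?_⟩
  rintro h' ⟨hA', hM', k', hk', hb'⟩
  funext a
  set g : A → B := fun x => h' x - h x with hg
  have gadd : ∀ x y : A, g (x + y) = g x + g y := by
    intro x y
    simp only [hg, hA, hA']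
    abel
  have gscal := hscal g gadd
  have gpow : ∀ (m : ℕ) (x : A), g ((c ^ m : ℝ) • x) = (c ^ m : ℝ) • g x := by
    intro m
    induction m with
    | zero => intro x; simp
    | succ m ih =>
      intro x
      rw [pow_succ', mul_smul, gscal, ih, mul_smul]
  have gbnd : ∀ x : A, ‖g x‖ ≤ (k' + C / (1 - r)) * ε * ‖x‖ ^ p := by
    intro x
    have : g x = (f x - h x) - (f x - h' x) := by simp only [hg]; abel
    rw [this]
    calc ‖(f x - h x) - (f x - h' x)‖ ≤ ‖f x - h x‖ + ‖f x - h' x‖ := norm_sub_le _ _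
      _ ≤ (C / (1 - r)) * ε * ‖x‖ ^ p + k' * ε * ‖x‖ ^ p := add_le_add (hbound x) (hb' x)
      _ = (k' + C / (1 - r)) * ε * ‖x‖ ^ p := by ring
  have key : ∀ m : ℕ, ‖g a‖ ≤ ((k' + C / (1 - r)) * ε * ‖a‖ ^ p) * r ^ m := by
    intro m
    have e : ‖g a‖ = ((c:ℝ) ^ m)⁻¹ * ‖g ((c ^ m : ℝ) • a)‖ := by
      rw [gpow, hnsB _ _ (cpow_pos m).le]
      field_simp
    rw [e]
    calc ((c:ℝ) ^ m)⁻¹ * ‖g ((c ^ m : ℝ) • a)‖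
        ≤ ((c:ℝ) ^ m)⁻¹ * ((k' + C / (1 - r)) * ε * ‖(c ^ m : ℝ) • a‖ ^ p) :=
          mul_le_mul_of_nonneg_left (gbnd _) (inv_nonneg.2 (cpow_pos m).le)
      _ = ((k' + C / (1 - r)) * ε * ‖a‖ ^ p) * r ^ m := by
          rw [hpowp, hrdef, div_pow]; field_simp
  have : ‖g a‖ ≤ 0 := ge_of_tendsto' (tgeo _) key
  have : g a = 0 := by
    have := le_antisymm this (norm_nonneg _)
    simpa using this
  exact sub_eq_zero.mp this

/-- Hyers–Ulam–Rassias stability of n-ring homomorphisms (Theorem 2.2). -/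
theorem stmt_4 {A B : Type*} [NormedRing A] [NormedAlgebra ℝ A]
    [NormedRing B] [NormedAlgebra ℝ B] [CompleteSpace B]
    (n : ℕ) (hn : 2 ≤ n) (ε δ : ℝ) (hε : 0 ≤ ε) (hδ : 0 ≤ δ) (p q : ℝ)
    (hpq : (p < 1 ∧ q < 1) ∨ (1 < p ∧ 1 < q)) (f : A → B)
    (hadd : ∀ a b : A, ‖f (a + b) - f a - f b‖ ≤ ε * (‖a‖ ^ p + ‖b‖ ^ p))
    (hmul : ∀ a : Fin n → A,
      ‖f (List.ofFn a).prod - ((List.ofFn a).map f).prod‖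
        ≤ δ * ∏ i : Fin n, ‖a i‖ ^ q) :
    ∃! h : A → B, (∀ a b : A, h (a + b) = h a + h b) ∧
      (∀ a : Fin n → A, h (List.ofFn a).prod = ((List.ofFn a).map h).prod) ∧
      ∃ k : ℝ, 0 < k ∧ ∀ a : A, ‖f a - h a‖ ≤ k * ε * ‖a‖ ^ p := by
  rcases hpq with ⟨hp, hq⟩ | ⟨hp, hq⟩
  · -- case p, q < 1 : use c = 2
    refine hur_aux n hn ε δ hδ p q f hadd hmul 2 1 two_pos one_pos ?_ ?_ ?_ ?_
    · calc (2:ℝ) ^ p < 2 ^ (1:ℝ) := Real.rpow_lt_rpow_of_exponent_lt one_lt_two hp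
        _ = 2 := Real.rpow_one 2
    · calc (2:ℝ) ^ q < 2 ^ (1:ℝ) := Real.rpow_lt_rpow_of_exponent_lt one_lt_two hq
        _ = 2 := Real.rpow_one 2
    · intro a
      have e : (2:ℝ)⁻¹ • f ((2:ℝ) • a) - f a = (2:ℝ)⁻¹ • (f (a + a) - f a - f a) := by
        rw [two_smul, smul_sub, smul_sub, sub_sub, ← add_smul]
        norm_num
      rw [e, norm_smul]
      have h1 := hadd a a
      calc ‖(2:ℝ)⁻¹‖ * ‖f (a + a) - f a - f a‖
          ≤ ‖(2:ℝ)⁻¹‖ * (ε * (‖a‖ ^ p + ‖a‖ ^ p)) :=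
            mul_le_mul_of_nonneg_left h1 (norm_nonneg _)
        _ = ε * 1 * ‖a‖ ^ p := by
            rw [Real.norm_of_nonneg (by norm_num : (0:ℝ) ≤ 2⁻¹)]; ring
    · intro g hg x
      rw [two_smul ℝ x, hg, two_smul]
  · -- case p, q > 1 : use c = 2⁻¹
    have h2 : (0:ℝ) < 2⁻¹ := by norm_num
    refine hur_aux n hn ε δ hδ p q f hadd hmul 2⁻¹ (2 * (2⁻¹:ℝ) ^ p) h2
      (by positivity) ?_ ?_ ?_ ?_
    · calc (2⁻¹:ℝ) ^ p < 2⁻¹ ^ (1:ℝ) :=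
          Real.rpow_lt_rpow_of_exponent_gt h2 (by norm_num) hp
        _ = 2⁻¹ := Real.rpow_one _
    · calc (2⁻¹:ℝ) ^ q < 2⁻¹ ^ (1:ℝ) :=
          Real.rpow_lt_rpow_of_exponent_gt h2 (by norm_num) hq
        _ = 2⁻¹ := Real.rpow_one _
    · intro a
      set b : A := (2⁻¹:ℝ) • a with hb
      have hbb : b + b = a := by rw [hb, ← add_smul]; norm_num
      have e : ((2⁻¹:ℝ))⁻¹ • f ((2⁻¹:ℝ) • a) - f a = -(f (b + b) - f b - f b) := by
        rw [hbb, inv_inv, ← hb, two_smul]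
        abel
      rw [e, norm_neg]
      have hnb : ‖b‖ = 2⁻¹ * ‖a‖ := by
        rw [hb, norm_smul, Real.norm_of_nonneg h2.le]
      have hnbp : ‖b‖ ^ p = (2⁻¹:ℝ) ^ p * ‖a‖ ^ p := by
        rw [hnb, Real.mul_rpow h2.le (norm_nonneg a)]
      calc ‖f (b + b) - f b - f b‖ ≤ ε * (‖b‖ ^ p + ‖b‖ ^ p) := hadd b b
        _ = ε * (2 * (2⁻¹:ℝ) ^ p) * ‖a‖ ^ p := by rw [hnbp]; ring
    · intro g hg x
      have hx : (2⁻¹:ℝ) • x + (2⁻¹:ℝ) • x = x := by rw [← add_smul]; norm_num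
      have h1 : g x = (2:ℝ) • g ((2⁻¹:ℝ) • x) := by
        conv_lhs => rw [← hx]
        rw [hg, two_smul]
      rw [eq_comm, h1, smul_smul]
      norm_num
end

section
/- Under the hypotheses of the stability theorem for n-ring derivations (f : A → X with ‖f(a+b)−f(a)−f(b)‖ ≤ ε(‖a‖^p+‖b‖^p), the product inequality, p ≠ 1, and D the unique n-ring derivation with ‖f(a)−D(a)‖ ≤ (2ε/(2−2^p))‖a‖^p), if moreover f(ca) = c f(a) for all scalars c ∈ ℂ and a ∈ A, then f = D; in particular f itself is an n-ring derivation. -/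
open MulOpposite

/-- Theorem 2.3, last part: if f is ℂ-homogeneous then f coincides with the
n-ring derivation D approximating it. -/
theorem stmt_6 {A X : Type*} [NormedRing A] [NormedAlgebra ℂ A]
    [NormedAddCommGroup X] [NormedSpace ℂ X] [CompleteSpace X]
    [Module A X] [Module Aᵐᵒᵖ X] [SMulCommClass A Aᵐᵒᵖ X]
    (n : ℕ) (hn : 2 ≤ n) (ε p : ℝ) (hε : 0 ≤ ε) (hp : 0 ≤ p) (hp1 : p ≠ 1)
    (f D : A → X)
    (hadd : ∀ a b : A, ‖f (a + b) - f a - f b‖ ≤ ε * (‖a‖ ^ p + ‖b‖ ^ p))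
    (hmul : ∀ a : Fin n → A,
      ‖f (List.ofFn a).prod -
          ∑ j : Fin n, ((List.ofFn a).take (j : ℕ)).prod •
            op (((List.ofFn a).drop ((j : ℕ) + 1)).prod) • f (a j)‖
        ≤ ε * ∑ i : Fin n, ‖a i‖ ^ p)
    (hD : ∀ a b : A, D (a + b) = D a + D b)
    (hDer : ∀ a : Fin n → A, D (List.ofFn a).prod
      = ∑ j : Fin n, ((List.ofFn a).take (j : ℕ)).prod •
          op (((List.ofFn a).drop ((j : ℕ) + 1)).prod) • D (a j))
    (hbound : ∀ a : A, ‖f a - D a‖ ≤ 2 * ε / (2 - 2 ^ p) * ‖a‖ ^ p)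
    (hhom : ∀ (c : ℂ) (a : A), f (c • a) = c • f a) :
    f = D := by
  funext a
  rcases lt_or_gt_of_ne hp1 with hlt | hgt
  · -- p < 1 : use f(m•a) = m f(a), D(m•a) = m D(a)
    have hD0 : D 0 = 0 := by
      have := hD 0 0
      simpa using this
    have hDn : ∀ (m : ℕ) (b : A), D (m • b) = m • D b := by
      intro m b
      induction m with
      | zero => simpa using hD0
      | succ k ih =>
        rw [succ_nsmul, succ_nsmul, hD, ih]
    have key : ∀ m : ℕ, 1 ≤ m →
        ‖f a - D a‖ ≤ 2 * ε / (2 - 2 ^ p) * ‖a‖ ^ p * (m : ℝ) ^ (p - 1) := by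
      intro m hm
      have hm0 : (0 : ℝ) < (m : ℝ) := by exact_mod_cast hm
      have h1 : f ((m : ℕ) • a) = (m : ℕ) • f a := by
        rw [← Nat.cast_smul_eq_nsmul ℂ, hhom, Nat.cast_smul_eq_nsmul]
      have h2 : ‖f ((m : ℕ) • a) - D ((m : ℕ) • a)‖
          ≤ 2 * ε / (2 - 2 ^ p) * ‖(m : ℕ) • a‖ ^ p := hbound _
      rw [h1, hDn] at h2
      have h3 : (m : ℕ) • f a - (m : ℕ) • D a = (m : ℕ) • (f a - D a) := by
        rw [smul_sub]
      rw [h3] at h2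
      have h4 : ‖(m : ℕ) • (f a - D a)‖ = (m : ℝ) * ‖f a - D a‖ := by
        rw [← Nat.cast_smul_eq_nsmul ℝ, norm_smul]
        simp
      have h5 : ‖(m : ℕ) • a‖ ^ p ≤ ((m : ℝ) * ‖a‖) ^ p := by
        apply Real.rpow_le_rpow (norm_nonneg _) _ hp
        rw [← Nat.cast_smul_eq_nsmul ℝ]
        calc ‖(m : ℝ) • a‖ ≤ ‖(m : ℝ)‖ * ‖a‖ := norm_smul_le _ _
        _ = (m : ℝ) * ‖a‖ := by rw [Real.norm_natCast]
      have hC : 0 ≤ 2 * ε / (2 - 2 ^ p) := by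
        apply div_nonneg (by linarith)
        have : (2 : ℝ) ^ p < 2 ^ (1 : ℝ) :=
          Real.rpow_lt_rpow_left_iff (by norm_num) |>.mpr hlt
        rw [Real.rpow_one] at this
        linarith
      have h6 : (m : ℝ) * ‖f a - D a‖
          ≤ 2 * ε / (2 - 2 ^ p) * ((m : ℝ) ^ p * ‖a‖ ^ p) := by
        rw [← h4]
        calc ‖(m : ℕ) • (f a - D a)‖
            ≤ 2 * ε / (2 - 2 ^ p) * ‖(m : ℕ) • a‖ ^ p := h2
          _ ≤ 2 * ε / (2 - 2 ^ p) * ((m : ℝ) * ‖a‖) ^ p :=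
              mul_le_mul_of_nonneg_left h5 hC
          _ = 2 * ε / (2 - 2 ^ p) * ((m : ℝ) ^ p * ‖a‖ ^ p) := by
              rw [Real.mul_rpow hm0.le (norm_nonneg _)]
      calc ‖f a - D a‖ = ((m : ℝ) * ‖f a - D a‖) / (m : ℝ) := by
            field_simp
        _ ≤ (2 * ε / (2 - 2 ^ p) * ((m : ℝ) ^ p * ‖a‖ ^ p)) / (m : ℝ) := by
            gcongr
        _ = 2 * ε / (2 - 2 ^ p) * ‖a‖ ^ p * (m : ℝ) ^ (p - 1) := by
            rw [Real.rpow_sub hm0, Real.rpow_one]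
            ring
    -- take the limit m → ∞
    have hten : Filter.Tendsto
        (fun m : ℕ => 2 * ε / (2 - 2 ^ p) * ‖a‖ ^ p * (m : ℝ) ^ (p - 1))
        Filter.atTop (nhds 0) := by
      rw [show (0:ℝ) = 2 * ε / (2 - 2 ^ p) * ‖a‖ ^ p * 0 by ring]
      apply Filter.Tendsto.const_mul
      have : p - 1 = -(1 - p) := by ring
      rw [this]
      exact (tendsto_rpow_neg_atTop (by linarith)).comp
        tendsto_natCast_atTop_atTop
    have : ‖f a - D a‖ ≤ 0 := by
      apply ge_of_tendsto hten
      filter_upwards [Filter.eventually_ge_atTop 1] with m hm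
      exact key m hm
    have := le_antisymm this (norm_nonneg _)
    rwa [norm_eq_zero, sub_eq_zero] at this
  · -- p > 1 : the bound constant is nonpositive
    have h2p : (2 : ℝ) < 2 ^ p := by
      have : (2:ℝ) ^ (1:ℝ) < 2 ^ p :=
        Real.rpow_lt_rpow_left_iff (by norm_num) |>.mpr hgt
      rwa [Real.rpow_one] at this
    have hC : 2 * ε / (2 - 2 ^ p) ≤ 0 :=
      div_nonpos_iff.mpr (Or.inl ⟨by linarith, by linarith⟩)
    have h := hbound a
    have : ‖f a - D a‖ ≤ 0 :=
      h.trans (mul_nonpos_iff.mpr (Or.inr ⟨hC, Real.rpow_nonneg (norm_nonneg _) _⟩))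
    have := le_antisymm this (norm_nonneg _)
    rwa [norm_eq_zero, sub_eq_zero] at this
end

section
/- Define φ : ℝ → ℝ by φ(x) = 0 for |x| ≤ 1 and φ(x) = x·ln|x| for |x| > 1, and let f : ℝ → M₃(ℝ) send x to the matrix with φ(x) in the (2,1) entry and zeros elsewhere. Then there exist ε, δ > 0 with |f(a+b) − f(a) − f(b)| ≤ ε(|a| + |b|) and ‖f(a₁⋯aₙ) − f(a₁)⋯f(aₙ)‖ ≤ δ·|a₁|²⋯|aₙ|² for all reals, yet there is no n-ring homomorphism h : ℝ → M₃(ℝ) and constant k > 0 such that ‖f(a) − h(a)‖ ≤ kε|a| for all a ∈ ℝ. -/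
attribute [local instance] Matrix.normedAddCommGroup

private lemma tlog_le_one {t : ℝ} (h0 : 0 ≤ t) (h1 : t ≤ 1) : |t * Real.log t| ≤ 1 := by
  rcases eq_or_lt_of_le h0 with h | h
  · simp [← h]
  · have hlog : Real.log t ≤ 0 := Real.log_nonpos h0 h1
    have hinv : Real.log t⁻¹ ≤ t⁻¹ - 1 := Real.log_le_sub_one_of_pos (by positivity)
    rw [Real.log_inv] at hinv
    have habs : |t * Real.log t| = t * -Real.log t := by
      rw [abs_of_nonpos (mul_nonpos_of_nonneg_of_nonpos h0 hlog)]; ring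
    rw [habs]
    have h2 : t * -Real.log t ≤ t * (t⁻¹ - 1) := by
      apply mul_le_mul_of_nonneg_left _ h0
      linarith
    have h3 : t * (t⁻¹ - 1) = 1 - t := by field_simp
    linarith

private lemma tlog_le_two {t : ℝ} (h0 : 0 < t) (h2 : t ≤ 2) : |t * Real.log t| ≤ 2 := by
  rcases le_or_gt t 1 with h1 | h1
  · linarith [tlog_le_one h0.le h1]
  · have hlog0 : 0 ≤ Real.log t := Real.log_nonneg h1.le
    have hlog : Real.log t ≤ t - 1 := Real.log_le_sub_one_of_pos h0
    rw [abs_of_nonneg (by positivity)]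
    nlinarith

private noncomputable def psi (x : ℝ) : ℝ := x * Real.log |x|

/-- Defect bound for ψ x = x log |x|, assuming |b| ≤ |a|. -/
private lemma psi_defect_aux (a b : ℝ) (hba : |b| ≤ |a|) :
    |psi (a + b) - psi a - psi b| ≤ 3 * (|a| + |b|) := by
  rcases eq_or_ne a 0 with rfl | ha
  · have hb : b = 0 := by simpa using le_antisymm (by simpa using hba) (abs_nonneg b)
    simp [hb, psi]
  · have ha0 : 0 < |a| := abs_pos.mpr ha
    set s : ℝ := a + b with hs_def
    set La : ℝ := Real.log |a| with hLa
    set Lb : ℝ := Real.log |b| with hLb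
    set Ls : ℝ := Real.log |s| with hLs
    have key : psi s - psi a - psi b = s * (Ls - La) + b * (La - Lb) := by
      simp only [psi, hLa, hLb, hLs, hs_def]; ring
    rw [key]
    have T1 : |s * (Ls - La)| ≤ 2 * |a| := by
      rcases eq_or_ne s 0 with hs | hs
      · rw [hs]; simp only [zero_mul, abs_zero]; positivity
      · have hs0 : 0 < |s| := abs_pos.mpr hs
        set t : ℝ := |s| / |a| with ht
        have ht0 : 0 < t := by positivity
        have ht2 : t ≤ 2 := by
          rw [div_le_iff₀ ha0]
          calc |s| ≤ |a| + |b| := abs_add_le a b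
            _ ≤ 2 * |a| := by linarith
        have hlog : Ls - La = Real.log t := by
          rw [ht, hLs, hLa, Real.log_div hs0.ne' ha0.ne']
        rw [hlog, abs_mul]
        have hab : |s| = |a| * t := by rw [ht]; field_simp
        calc |s| * |Real.log t| = |a| * (t * |Real.log t|) := by rw [hab]; ring
          _ = |a| * |t * Real.log t| := by rw [abs_mul, abs_of_pos ht0]
          _ ≤ |a| * 2 := mul_le_mul_of_nonneg_left (tlog_le_two ht0 ht2) ha0.le
          _ = 2 * |a| := by ring
    have T2 : |b * (La - Lb)| ≤ |a| := by
      rcases eq_or_ne b 0 with rfl | hb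
      · simp only [zero_mul, abs_zero]; positivity
      · have hb0 : 0 < |b| := abs_pos.mpr hb
        set u : ℝ := |b| / |a| with hu
        have hu0 : 0 < u := by positivity
        have hu1 : u ≤ 1 := by rw [div_le_one ha0]; exact hba
        have hlog : La - Lb = -Real.log u := by
          rw [hu, hLa, hLb, Real.log_div hb0.ne' ha0.ne']; ring
        rw [hlog, mul_neg, abs_neg, abs_mul]
        have hbu : |b| = |a| * u := by rw [hu]; field_simp
        calc |b| * |Real.log u| = |a| * (u * |Real.log u|) := by rw [hbu]; ring
          _ = |a| * |u * Real.log u| := by rw [abs_mul, abs_of_pos hu0]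
          _ ≤ |a| * 1 := mul_le_mul_of_nonneg_left (tlog_le_one hu0.le hu1) ha0.le
          _ = |a| := by ring
    calc |s * (Ls - La) + b * (La - Lb)|
        ≤ |s * (Ls - La)| + |b * (La - Lb)| := abs_add_le _ _
      _ ≤ 2 * |a| + |a| := add_le_add T1 T2
      _ ≤ 3 * (|a| + |b|) := by have := abs_nonneg b; linarith

private lemma psi_defect (a b : ℝ) :
    |psi (a + b) - psi a - psi b| ≤ 3 * (|a| + |b|) := by
  rcases le_total |b| |a| with h | h
  · exact psi_defect_aux a b h
  · have h2 := psi_defect_aux b a h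
    rw [add_comm b a] at h2
    calc |psi (a + b) - psi a - psi b|
        = |psi (a + b) - psi b - psi a| := by ring_nf
      _ ≤ 3 * (|b| + |a|) := h2
      _ = 3 * (|a| + |b|) := by ring

private lemma norm_sbm (c : ℝ) : ‖Matrix.single (1 : Fin 3) (0 : Fin 3) c‖ = |c| := by
  apply le_antisymm
  · rw [Matrix.norm_le_iff (abs_nonneg c)]
    intro i j
    rw [Matrix.single]
    by_cases h : (1 : Fin 3) = i ∧ (0 : Fin 3) = j
    · simp [Matrix.of_apply, h]
    · simp [Matrix.of_apply, h, abs_nonneg]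
  · have := Matrix.norm_entry_le_entrywise_sup_norm
      (Matrix.single (1 : Fin 3) (0 : Fin 3) c) (i := 1) (j := 0)
    simpa using this

/-- Example 2.5: the Luminet-type counterexample showing Theorem 2.2 fails at p = 1. -/
theorem stmt_10 (n : ℕ) (hn : 2 ≤ n)
    (φ : ℝ → ℝ) (hφ : ∀ x : ℝ, φ x = if |x| ≤ 1 then 0 else x * Real.log |x|)
    (f : ℝ → Matrix (Fin 3) (Fin 3) ℝ)
    (hf : ∀ x : ℝ, f x = Matrix.single 1 0 (φ x)) :
    ∃ ε > (0 : ℝ), ∃ δ > (0 : ℝ),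
      (∀ a b : ℝ, ‖f (a + b) - f a - f b‖ ≤ ε * (|a| + |b|)) ∧
      (∀ a : Fin n → ℝ,
        ‖f (List.ofFn a).prod - ((List.ofFn a).map f).prod‖
          ≤ δ * ∏ i : Fin n, |a i| ^ 2) ∧
      ¬ ∃ (h : ℝ → Matrix (Fin 3) (Fin 3) ℝ) (k : ℝ), 0 < k ∧
          (∀ a b : ℝ, h (a + b) = h a + h b) ∧
          (∀ a : Fin n → ℝ, h (List.ofFn a).prod = ((List.ofFn a).map h).prod) ∧
          (∀ a : ℝ, ‖f a - h a‖ ≤ k * ε * |a|) := by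
  -- difference of stdBasisMatrices
  have hsub : ∀ x y z : ℝ, Matrix.single (1 : Fin 3) (0 : Fin 3) x -
      Matrix.single 1 0 y - Matrix.single 1 0 z
      = Matrix.single 1 0 (x - y - z) := by
    intro x y z
    ext i j
    rw [Matrix.sub_apply, Matrix.sub_apply, Matrix.single, Matrix.single,
      Matrix.single, Matrix.single]
    by_cases h : (1 : Fin 3) = i ∧ (0 : Fin 3) = j <;> simp [Matrix.of_apply, h]
  -- |φ x - ψ x| ≤ 1
  have hφψ : ∀ x : ℝ, |φ x - psi x| ≤ 1 := by
    intro x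
    rw [hφ x]
    by_cases h : |x| ≤ 1
    · simp only [if_pos h, zero_sub, abs_neg, psi]
      have heq : abs (x * Real.log |x|) = abs (|x| * Real.log |x|) := by
        rw [abs_mul, abs_mul, abs_abs]
      rw [heq]
      exact tlog_le_one (abs_nonneg x) h
    · simp [if_neg h, psi]
  -- |φ x| ≤ x ^ 2
  have hφsq : ∀ x : ℝ, |φ x| ≤ x ^ 2 := by
    intro x
    rw [hφ x]
    by_cases h : |x| ≤ 1
    · simp [if_pos h]; positivity
    · push_neg at h
      simp only [if_neg (not_le.mpr h)]
      have hx0 : (0 : ℝ) < |x| := by linarith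
      have hlog0 : 0 ≤ Real.log |x| := Real.log_nonneg h.le
      have hlog : Real.log |x| ≤ |x| - 1 := Real.log_le_sub_one_of_pos hx0
      have heq : abs (x * Real.log |x|) = |x| * Real.log |x| := by
        rw [abs_mul, abs_of_nonneg hlog0]
      rw [heq, ← sq_abs]
      nlinarith
  refine ⟨6, by norm_num, 1, by norm_num, ?_, ?_, ?_⟩
  · -- approximate additivity
    intro a b
    rw [hf, hf, hf, hsub, norm_sbm]
    by_cases hsmall : |a + b| ≤ 1 ∧ |a| ≤ 1 ∧ |b| ≤ 1
    · rw [hφ, hφ, hφ, if_pos hsmall.1, if_pos hsmall.2.1, if_pos hsmall.2.2]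
      simp only [sub_zero, sub_self, abs_zero]
      positivity
    · have hbig : 1 ≤ |a| + |b| := by
        by_contra hc
        push_neg at hc
        have h1 : |a| ≤ 1 := by have := abs_nonneg b; linarith
        have h2 : |b| ≤ 1 := by have := abs_nonneg a; linarith
        have h3 : |a + b| ≤ 1 := le_trans (abs_add_le a b) hc.le
        exact hsmall ⟨h3, h1, h2⟩
      have key := psi_defect a b
      have e1 := hφψ (a + b); have e2 := hφψ a; have e3 := hφψ b
      have hmain : |φ (a + b) - φ a - φ b| ≤ 3 * (|a| + |b|) + 3 := by
        have hdiff : abs ((φ (a + b) - φ a - φ b) - (psi (a + b) - psi a - psi b)) ≤ 3 := by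
          calc abs ((φ (a + b) - φ a - φ b) - (psi (a + b) - psi a - psi b))
              = abs (((φ (a + b) - psi (a + b)) - (φ a - psi a)) - (φ b - psi b)) := by
                ring_nf
            _ ≤ abs ((φ (a + b) - psi (a + b)) - (φ a - psi a)) + |φ b - psi b| :=
                abs_sub _ _
            _ ≤ (|φ (a + b) - psi (a + b)| + |φ a - psi a|) + |φ b - psi b| := by
                gcongr
                exact abs_sub _ _
            _ ≤ 3 := by linarith
        calc |φ (a + b) - φ a - φ b|
            = abs (((φ (a + b) - φ a - φ b) - (psi (a + b) - psi a - psi b))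
                + (psi (a + b) - psi a - psi b)) := by ring_nf
          _ ≤ abs ((φ (a + b) - φ a - φ b) - (psi (a + b) - psi a - psi b))
                + |psi (a + b) - psi a - psi b| := abs_add_le _ _
          _ ≤ 3 * (|a| + |b|) + 3 := by linarith
      linarith
  · -- approximate n-multiplicativity
    intro a
    obtain ⟨m, rfl⟩ : ∃ m, n = m + 2 := ⟨n - 2, by omega⟩
    have hzero : ((List.ofFn a).map f).prod = 0 := by
      rw [List.ofFn_succ, List.ofFn_succ]
      simp only [List.map_cons, List.prod_cons, ← mul_assoc]
      rw [hf, hf, Matrix.single_mul_single_of_ne]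
      · simp
      · exact (by decide : (0 : Fin 3) ≠ 1)
    rw [hzero, sub_zero, hf, norm_sbm]
    have hprod : (List.ofFn a).prod = ∏ i, a i := List.prod_ofFn
    rw [hprod]
    have hx2 : ∏ i : Fin (m + 2), |a i| ^ 2 = (∏ i, a i) ^ 2 := by
      rw [← Finset.prod_pow]
      exact Finset.prod_congr rfl fun i _ => sq_abs _
    rw [hx2, one_mul]
    exact hφsq _
  · -- nonexistence
    rintro ⟨h, k, hk, hadd, -, hclose⟩
    have h0 : h 0 = 0 := by
      have := hadd 0 0
      simpa using this
    have hN : ∀ (N : ℕ) (x : ℝ), h ((N : ℝ) * x) = (N : ℝ) • h x := by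
      intro N x
      induction N with
      | zero => simpa using h0
      | succ N ih =>
        push_cast
        rw [add_mul, one_mul, hadd, ih, add_smul, one_smul]
    -- entry bound
    have hentry : ∀ a : ℝ, |φ a - h a 1 0| ≤ 6 * k * |a| := by
      intro a
      have h1 := hclose a
      have h2 : ‖(f a - h a) 1 0‖ ≤ ‖f a - h a‖ :=
        Matrix.norm_entry_le_entrywise_sup_norm _
      have h3 : (f a - h a) 1 0 = φ a - h a 1 0 := by
        rw [hf, Matrix.sub_apply, Matrix.single]
        simp [Matrix.of_apply]
      rw [h3] at h2
      calc |φ a - h a 1 0| ≤ ‖f a - h a‖ := h2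
        _ ≤ k * 6 * |a| := h1
        _ = 6 * k * |a| := by ring
    set g : ℝ := h 1 1 0 with hg
    have hkey : ∀ M : ℕ, 1 ≤ M → |(M : ℝ) * Real.log 2 - g| ≤ 6 * k := by
      intro M hM
      have hp : (0 : ℝ) < 2 ^ M := by positivity
      have hh : h (2 ^ M) = ((2 ^ M : ℕ) : ℝ) • h 1 := by
        have := hN (2 ^ M) 1
        rw [mul_one] at this
        rw [← this]
        norm_cast
      have h2M : (1 : ℝ) < 2 ^ M := one_lt_pow₀ one_lt_two (by omega)
      have hφ2 : φ (2 ^ M) = 2 ^ M * ((M : ℝ) * Real.log 2) := by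
        rw [hφ]
        rw [if_neg (by rw [abs_of_pos hp]; exact not_le.mpr h2M)]
        rw [abs_of_pos hp, Real.log_pow]
      have he := hentry (2 ^ M)
      rw [hφ2, hh] at he
      have hent : (((2 ^ M : ℕ) : ℝ) • h 1) 1 0 = (2 : ℝ) ^ M * g := by
        rw [hg, Matrix.smul_apply]
        push_cast
        rw [smul_eq_mul]
      rw [hent] at he
      have hfac : (2 : ℝ) ^ M * ((M : ℝ) * Real.log 2) - 2 ^ M * g
          = 2 ^ M * ((M : ℝ) * Real.log 2 - g) := by ring
      rw [hfac, abs_mul, abs_of_pos hp] at he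
      calc |(M : ℝ) * Real.log 2 - g|
          = 2 ^ M * |(M : ℝ) * Real.log 2 - g| / 2 ^ M := by field_simp
        _ ≤ 6 * k * 2 ^ M / 2 ^ M := by gcongr
        _ = 6 * k := by field_simp
    have hlog2 : 0 < Real.log 2 := Real.log_pos (by norm_num)
    obtain ⟨M, hM⟩ := exists_nat_gt (max 1 ((6 * k + |g|) / Real.log 2))
    have hM1 : 1 ≤ M := by
      have h1M : (1 : ℝ) ≤ M := (lt_of_le_of_lt (le_max_left _ _) hM).le
      exact_mod_cast h1M
    have hkeyM := hkey M hM1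
    have hMl : 6 * k + |g| < (M : ℝ) * Real.log 2 := by
      have := lt_of_le_of_lt (le_max_right 1 ((6 * k + |g|) / Real.log 2)) hM
      rwa [div_lt_iff₀ hlog2] at this
    have hle : (M : ℝ) * Real.log 2 - g ≤ |(M : ℝ) * Real.log 2 - g| := le_abs_self _
    have hgle : g ≤ |g| := le_abs_self g
    linarith
end

section
/- Let φ(x) = x·ln|x| for |x| > 1 and φ(x) = 0 for |x| ≤ 1. Then there exists ε > 0 such that |φ(x+y) − φ(x) − φ(y)| ≤ ε(|x| + |y|) for all x, y ∈ ℝ, but for no additive function T : ℝ → ℝ and constant k > 0 does |φ(x) − T(x)| ≤ k|x| hold for all x ∈ ℝ. -/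
noncomputable def fcore (x : ℝ) : ℝ := x * Real.log |x|

lemma fcore_neg (x : ℝ) : fcore (-x) = - fcore x := by
  simp [fcore, abs_neg]

lemma fcore_zero : fcore 0 = 0 := by simp [fcore]

lemma lemA {a b : ℝ} (ha : 0 < a) (hb : 0 < b) :
    |fcore (a+b) - fcore a - fcore b| ≤ a + b := by
  have hs : 0 < a + b := by linarith
  have hfa : fcore a = a * Real.log a := by rw [fcore, abs_of_pos ha]
  have hfb : fcore b = b * Real.log b := by rw [fcore, abs_of_pos hb]
  have hfs : fcore (a+b) = (a+b) * Real.log (a+b) := by rw [fcore, abs_of_pos hs]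
  have hla : Real.log a ≤ Real.log (a+b) := Real.log_le_log (by linarith) (by linarith)
  have hlb : Real.log b ≤ Real.log (a+b) := Real.log_le_log (by linarith) (by linarith)
  have h1 : Real.log ((a+b)/a) ≤ (a+b)/a - 1 := Real.log_le_sub_one_of_pos (by positivity)
  have h2 : Real.log ((a+b)/b) ≤ (a+b)/b - 1 := Real.log_le_sub_one_of_pos (by positivity)
  rw [Real.log_div (by linarith) ha.ne'] at h1
  rw [Real.log_div (by linarith) hb.ne'] at h2
  have e1 : a * (Real.log (a+b) - Real.log a) ≤ b := by
    have := mul_le_mul_of_nonneg_left h1 ha.le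
    calc a * (Real.log (a+b) - Real.log a) ≤ a * ((a+b)/a - 1) := this
      _ = b := by field_simp; ring
  have e2 : b * (Real.log (a+b) - Real.log b) ≤ a := by
    have := mul_le_mul_of_nonneg_left h2 hb.le
    calc b * (Real.log (a+b) - Real.log b) ≤ b * ((a+b)/b - 1) := this
      _ = a := by field_simp; ring
  rw [hfa, hfb, hfs, abs_le]
  constructor
  · nlinarith [mul_nonneg ha.le (sub_nonneg.2 hla), mul_nonneg hb.le (sub_nonneg.2 hlb)]
  · nlinarith

lemma lemB {x : ℝ} (y : ℝ) (hx : 0 < x) :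
    |fcore (x+y) - fcore x - fcore y| ≤ |x| + |y| := by
  rcases lt_trichotomy y 0 with hy|hy|hy
  · rcases lt_trichotomy (x+y) 0 with hs|hs|hs
    · have hs' : 0 < -(x+y) := by linarith
      have key := lemA hx hs'
      have e : x + -(x+y) = -y := by ring
      rw [e, fcore_neg, fcore_neg] at key
      have he : fcore (x+y) - fcore x - fcore y
          = -fcore y - fcore x - -fcore (x+y) := by ring
      rw [he]
      calc |-fcore y - fcore x - -fcore (x+y)| ≤ -y := key
        _ ≤ |x| + |y| := by
            have := neg_le_abs y
            have := abs_nonneg x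
            linarith
    · have : y = -x := by linarith
      subst this
      simp [fcore_neg, fcore_zero]
    · have ha : 0 < -y := by linarith
      have key := lemA hs ha
      have e : (x+y) + -y = x := by ring
      rw [e, fcore_neg] at key
      have he : fcore (x+y) - fcore x - fcore y
          = -(fcore x - fcore (x+y) - -fcore y) := by ring
      rw [he, abs_neg]
      calc |fcore x - fcore (x+y) - -fcore y| ≤ x := key
        _ ≤ |x| + |y| := by
            have := le_abs_self x
            have := abs_nonneg y
            linarith
  · subst hy; simp [fcore_zero]
  · calc |fcore (x+y) - fcore x - fcore y| ≤ x + y := lemA hx hy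
      _ ≤ |x| + |y| := add_le_add (le_abs_self x) (le_abs_self y)

lemma lemF (x y : ℝ) : |fcore (x+y) - fcore x - fcore y| ≤ |x| + |y| := by
  rcases lt_trichotomy x 0 with hx|hx|hx
  · have hx' : 0 < -x := by linarith
    have key := lemB (-y) hx'
    have e : -x + -y = -(x+y) := by ring
    rw [e, fcore_neg, fcore_neg, fcore_neg] at key
    have he : fcore (x+y) - fcore x - fcore y
        = -(-fcore (x+y) - -fcore x - -fcore y) := by ring
    rw [he, abs_neg]
    calc |-fcore (x+y) - -fcore x - -fcore y| ≤ |-x| + |-y| := key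
      _ = |x| + |y| := by rw [abs_neg, abs_neg]
  · subst hx; simp [fcore_zero]
  · exact lemB y hx

lemma phi_close (φ : ℝ → ℝ)
    (hφ : ∀ x : ℝ, φ x = if |x| ≤ 1 then 0 else x * Real.log |x|) (z : ℝ) :
    |φ z - fcore z| ≤ 1 := by
  rw [hφ]
  by_cases h : |z| ≤ 1
  · rw [if_pos h]
    rcases eq_or_lt_of_le (abs_nonneg z) with h0|h0
    · simp [fcore, ← h0, abs_eq_zero.mp h0.symm]
    · have hlog : Real.log (|z|⁻¹) ≤ |z|⁻¹ - 1 := Real.log_le_sub_one_of_pos (by positivity)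
      rw [Real.log_inv] at hlog
      have hle : -Real.log |z| ≤ |z|⁻¹ - 1 := by linarith
      have hlz : Real.log |z| ≤ 0 := Real.log_nonpos (abs_nonneg z) h
      have : |fcore z| = |z| * (-Real.log |z|) := by
        rw [fcore, abs_mul, abs_of_nonpos hlz]
      rw [show (0:ℝ) - fcore z = -fcore z by ring, abs_neg, this]
      calc |z| * (-Real.log |z|) ≤ |z| * (|z|⁻¹ - 1) := by
            exact mul_le_mul_of_nonneg_left hle (abs_nonneg z)
        _ = 1 - |z| := by field_simp
        _ ≤ 1 := by linarith
  · rw [if_neg h]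
    simp [fcore]

/-- The core analytic counterexample at p = 1: φ is approximately additive with
linear control, but is not approximated by any additive map with linear error. -/
theorem stmt_11 (φ : ℝ → ℝ)
    (hφ : ∀ x : ℝ, φ x = if |x| ≤ 1 then 0 else x * Real.log |x|) :
    (∃ ε > (0 : ℝ), ∀ x y : ℝ, |φ (x + y) - φ x - φ y| ≤ ε * (|x| + |y|)) ∧
    (∀ T : ℝ → ℝ, (∀ x y : ℝ, T (x + y) = T x + T y) →
      ∀ k : ℝ, 0 < k → ¬ ∀ x : ℝ, |φ x - T x| ≤ k * |x|) := by
  constructor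
  · refine ⟨4, by norm_num, fun x y => ?_⟩
    by_cases h : |x| + |y| ≤ 1
    · have hx1 : |x| ≤ 1 := by have := abs_nonneg y; linarith
      have hy1 : |y| ≤ 1 := by have := abs_nonneg x; linarith
      have hs1 : |x + y| ≤ 1 := le_trans (abs_add_le x y) h
      rw [hφ (x+y), hφ x, hφ y, if_pos hs1, if_pos hx1, if_pos hy1]
      simp
      positivity
    · push_neg at h
      have c1 := phi_close φ hφ (x+y)
      have c2 := phi_close φ hφ x
      have c3 := phi_close φ hφ y
      have cF := lemF x y
      obtain ⟨l1, u1⟩ := abs_le.mp c1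
      obtain ⟨l2, u2⟩ := abs_le.mp c2
      obtain ⟨l3, u3⟩ := abs_le.mp c3
      obtain ⟨lF, uF⟩ := abs_le.mp cF
      rw [abs_le]
      constructor <;> nlinarith
  · intro T hT k hk hall
    have hl2 : 0 < Real.log 2 := Real.log_pos (by norm_num)
    obtain ⟨n, hn⟩ := exists_nat_gt ((k + |T 1|)/Real.log 2)
    have hn' : k + |T 1| < n * Real.log 2 := by
      rw [div_lt_iff₀ hl2] at hn; linarith
    have hpow : ∀ m : ℕ, T ((2:ℝ)^m) = 2^m * T 1 := by
      intro m
      induction m with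
      | zero => simp
      | succ m ih =>
          have e : (2:ℝ)^(m+1) = 2^m + 2^m := by ring
          rw [e, hT, ih]; ring
    have hn1 : 1 ≤ n := by
      by_contra hc
      push_neg at hc
      interval_cases n
      have hpos : 0 < (k + |T 1|)/Real.log 2 := div_pos (by positivity) hl2
      simp at hn
      linarith
    have h2n : (1:ℝ) < 2^n := one_lt_pow₀ (by norm_num) (by omega)
    have h2pos : (0:ℝ) < 2^n := by positivity
    have hφn : φ (2^n) = 2^n * (n * Real.log 2) := by
      rw [hφ, if_neg (by rw [abs_of_pos h2pos]; linarith), abs_of_pos h2pos, Real.log_pow]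
    have key := hall (2^n)
    rw [hφn, hpow n, abs_of_pos h2pos,
      show (2:ℝ)^n * (n * Real.log 2) - 2^n * T 1 = 2^n * (n * Real.log 2 - T 1) by ring,
      abs_mul, abs_of_pos h2pos] at key
    have hk2 : |(n:ℝ) * Real.log 2 - T 1| ≤ k := by
      have := (mul_le_mul_iff_right₀ h2pos).mp (by linarith [key] : (2:ℝ)^n * |(n:ℝ) * Real.log 2 - T 1| ≤ 2^n * k)
      linarith
    have h1 := le_abs_self ((n:ℝ) * Real.log 2 - T 1)
    have h2 := le_abs_self (T 1)
    linarith
end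

section
/- Let A be a ring, B a Banach algebra, and f : A → B with ‖f(a+b) − f(a) − f(b)‖ ≤ ε for all a, b ∈ A. Then for each a ∈ A the sequence (2^{−m} f(2^m a))ₘ is Cauchy, its limit h(a) defines an additive map, ‖f(a) − h(a)‖ ≤ ε for all a, and h is the unique additive map within bounded distance of f. -/
open Filter Topology

/-- Hyers' theorem in the setting of the paper. -/
theorem stmt_12 {A B : Type*} [Ring A] [NormedRing B] [NormedAlgebra ℝ B]
    [CompleteSpace B] (ε : ℝ) (hε : 0 ≤ ε) (f : A → B)
    (hadd : ∀ a b : A, ‖f (a + b) - f a - f b‖ ≤ ε) :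
    (∀ a : A, CauchySeq (fun m : ℕ => ((2 : ℝ) ^ m)⁻¹ • f ((2 ^ m : ℕ) • a))) ∧
    ∃ h : A → B,
      (∀ a : A, Tendsto (fun m : ℕ => ((2 : ℝ) ^ m)⁻¹ • f ((2 ^ m : ℕ) • a))
        atTop (𝓝 (h a))) ∧
      (∀ a b : A, h (a + b) = h a + h b) ∧
      (∀ a : A, ‖f a - h a‖ ≤ ε) ∧
      (∀ g : A → B, (∀ a b : A, g (a + b) = g a + g b) →
        (∃ C : ℝ, ∀ a : A, ‖f a - g a‖ ≤ C) → g = h) := by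
  set g : A → ℕ → B := fun a m => ((2 : ℝ) ^ m)⁻¹ • f ((2 ^ m : ℕ) • a) with hgdef
  have key : ∀ (a : A) (m : ℕ), dist (g a m) (g a (m + 1)) ≤ (ε / 2) * (1 / 2) ^ m := by
    intro a m
    have h2 : ((2 : ℕ) ^ (m + 1)) • a = (2 ^ m : ℕ) • a + (2 ^ m : ℕ) • a := by
      rw [pow_succ, mul_two, add_nsmul]
    have hb := hadd ((2 ^ m : ℕ) • a) ((2 ^ m : ℕ) • a)
    rw [← h2] at hb
    have hdiff : g a (m + 1) - g a m
        = ((2 : ℝ) ^ (m + 1))⁻¹ •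
          (f ((2 ^ (m + 1) : ℕ) • a) - f ((2 ^ m : ℕ) • a) - f ((2 ^ m : ℕ) • a)) := by
      simp only [hgdef]
      match_scalars
      field_simp
      ring
    rw [dist_comm, dist_eq_norm, hdiff, norm_smul]
    calc ‖((2 : ℝ) ^ (m + 1))⁻¹‖ *
          ‖f ((2 ^ (m + 1) : ℕ) • a) - f ((2 ^ m : ℕ) • a) - f ((2 ^ m : ℕ) • a)‖
        ≤ ((2 : ℝ) ^ (m + 1))⁻¹ * ε := by
          rw [norm_inv, norm_pow, Real.norm_ofNat]
          exact mul_le_mul_of_nonneg_left hb (by positivity)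
      _ = (ε / 2) * (1 / 2) ^ m := by
          rw [pow_succ]
          rw [mul_inv, one_div, inv_pow]
          ring
  have hcauchy : ∀ a : A, CauchySeq (g a) := fun a =>
    cauchySeq_of_le_geometric (1 / 2) (ε / 2) (by norm_num) (key a)
  refine ⟨hcauchy, ?_⟩
  have hexists : ∀ a : A, ∃ x : B, Tendsto (g a) atTop (𝓝 x) := fun a =>
    cauchySeq_tendsto_of_complete (hcauchy a)
  choose h hh using hexists
  have hzero : ∀ D : ℝ, Tendsto (fun m : ℕ => ((2 : ℝ) ^ m)⁻¹ * D) atTop (𝓝 0) := by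
    intro D
    have : Tendsto (fun m : ℕ => ((2 : ℝ) ^ m)⁻¹) atTop (𝓝 0) :=
      tendsto_inv_atTop_zero.comp (tendsto_pow_atTop_atTop_of_one_lt (by norm_num))
    simpa using this.mul_const D
  refine ⟨h, hh, ?_, ?_, ?_⟩
  · -- additivity
    intro a b
    have hT : Tendsto (fun m => g (a + b) m - g a m - g b m) atTop
        (𝓝 (h (a + b) - h a - h b)) := ((hh (a + b)).sub (hh a)).sub (hh b)
    have hnorm : ∀ m : ℕ, ‖g (a + b) m - g a m - g b m‖ ≤ ((2 : ℝ) ^ m)⁻¹ * ε := by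
      intro m
      have hsa : (2 ^ m : ℕ) • (a + b) = (2 ^ m : ℕ) • a + (2 ^ m : ℕ) • b := smul_add _ _ _
      have hb := hadd ((2 ^ m : ℕ) • a) ((2 ^ m : ℕ) • b)
      rw [← hsa] at hb
      have heq : g (a + b) m - g a m - g b m
          = ((2 : ℝ) ^ m)⁻¹ •
            (f ((2 ^ m : ℕ) • (a + b)) - f ((2 ^ m : ℕ) • a) - f ((2 ^ m : ℕ) • b)) := by
        simp only [hgdef, smul_sub]
      rw [heq, norm_smul, norm_inv, norm_pow, Real.norm_ofNat]
      exact mul_le_mul_of_nonneg_left hb (by positivity)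
    have hlim0 : Tendsto (fun m => g (a + b) m - g a m - g b m) atTop (𝓝 (0 : B)) :=
      squeeze_zero_norm hnorm (hzero ε)
    have h' : h (a + b) - h a - h b = 0 := tendsto_nhds_unique hT hlim0
    rw [sub_sub, sub_eq_zero] at h'
    exact h'
  · -- bound
    intro a
    have hd := dist_le_of_le_geometric_of_tendsto₀ (1 / 2) (ε / 2) (by norm_num) (key a) (hh a)
    have hg0 : g a 0 = f a := by simp [hgdef]
    rw [hg0] at hd
    rw [← dist_eq_norm]
    calc dist (f a) (h a) ≤ (ε / 2) / (1 - 1 / 2) := hd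
      _ = ε := by ring
  · -- uniqueness
    intro g' hg' ⟨C, hC⟩
    have hg'0 : g' 0 = 0 := by
      have h0 : g' 0 = g' 0 + g' 0 := by simpa using hg' 0 0
      have := left_eq_add.mp h0
      exact this
    have hnsmul : ∀ (n : ℕ) (a : A), g' (n • a) = n • g' a := by
      intro n a
      induction n with
      | zero => simpa using hg'0
      | succ n ih => rw [succ_nsmul, hg' (n • a) a, ih, succ_nsmul]
    funext a
    have hbound : ∀ m : ℕ, ‖g a m - g' a‖ ≤ ((2 : ℝ) ^ m)⁻¹ * C := by
      intro m
      have hcancel : ((2 : ℝ) ^ m)⁻¹ • ((2 ^ m : ℕ) • g' a) = g' a := by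
        rw [← Nat.cast_smul_eq_nsmul ℝ]
        push_cast
        rw [smul_smul, inv_mul_cancel₀ (by positivity), one_smul]
      have heq : g a m - g' a
          = ((2 : ℝ) ^ m)⁻¹ • (f ((2 ^ m : ℕ) • a) - g' ((2 ^ m : ℕ) • a)) := by
        rw [smul_sub, hnsmul, hcancel]
      rw [heq, norm_smul, norm_inv, norm_pow, Real.norm_ofNat]
      exact mul_le_mul_of_nonneg_left (hC _) (by positivity)
    have hlim0 : Tendsto (fun m => g a m - g' a) atTop (𝓝 (0 : B)) :=
      squeeze_zero_norm hbound (hzero C)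
    have hT : Tendsto (g a) atTop (𝓝 (g' a)) := by
      have := hlim0.add_const (g' a)
      simpa using this
    exact tendsto_nhds_unique hT (hh a)
end

section
/- Let A be a normed algebra over ℝ with p < 1 and ε ≥ 0, and f : A → X into a Banach space with ‖f(a+b) − f(a) − f(b)‖ ≤ ε(‖a‖^p + ‖b‖^p) for all a, b. Then D(a) = limₘ 2^{−m} f(2^m a) exists, is additive, and satisfies ‖f(a) − D(a)‖ ≤ (2ε/(2−2^p))‖a‖^p for all a ∈ A, and D is the unique additive map with this property. -/
open Filter Topology

/-- Rassias's stability theorem for p < 1, as used in the paper. -/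
theorem stmt_16 {A X : Type*} [NormedRing A] [NormedAlgebra ℝ A]
    [NormedAddCommGroup X] [NormedSpace ℝ X] [CompleteSpace X]
    (ε p : ℝ) (hε : 0 ≤ ε) (hp : p < 1) (f : A → X)
    (hadd : ∀ a b : A, ‖f (a + b) - f a - f b‖ ≤ ε * (‖a‖ ^ p + ‖b‖ ^ p)) :
    ∃ D : A → X,
      (∀ a : A, Tendsto (fun m : ℕ => ((2 : ℝ) ^ m)⁻¹ • f ((2 ^ m : ℕ) • a))
        atTop (𝓝 (D a))) ∧
      (∀ a b : A, D (a + b) = D a + D b) ∧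
      (∀ a : A, ‖f a - D a‖ ≤ 2 * ε / (2 - 2 ^ p) * ‖a‖ ^ p) ∧
      (∀ g : A → X, (∀ a b : A, g (a + b) = g a + g b) →
        (∀ a : A, ‖f a - g a‖ ≤ 2 * ε / (2 - 2 ^ p) * ‖a‖ ^ p) → g = D) := by
  set r : ℝ := (2 : ℝ) ^ (p - 1) with hr_def
  have hr0 : 0 < r := Real.rpow_pos_of_pos (by norm_num) _
  have hr1 : r < 1 := Real.rpow_lt_one_of_one_lt_of_neg (by norm_num) (by linarith)
  have h2p : (0:ℝ) < 2 - 2 ^ p := by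
    have : (2:ℝ) ^ p < 2 ^ (1:ℝ) :=
      Real.rpow_lt_rpow_of_exponent_lt (by norm_num) hp
    simpa [Real.rpow_one] using sub_pos.mpr this
  set u : A → ℕ → X := fun a m => ((2 : ℝ) ^ m)⁻¹ • f ((2 ^ m : ℕ) • a) with hu_def
  have hc : ∀ m : ℕ, (0:ℝ) < (2:ℝ) ^ m := fun m => by positivity
  -- norm of 2^m • a
  have hnorm : ∀ (a : A) (m : ℕ), ‖((2 ^ m : ℕ) • a)‖ = (2:ℝ) ^ m * ‖a‖ := by
    intro a m
    rw [← Nat.cast_smul_eq_nsmul ℝ, norm_smul]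
    simp
  have hnormp : ∀ (a : A) (m : ℕ),
      ‖((2 ^ m : ℕ) • a)‖ ^ p = ((2:ℝ) ^ m) ^ p * ‖a‖ ^ p := by
    intro a m
    rw [hnorm, Real.mul_rpow (le_of_lt (hc m)) (norm_nonneg a)]
  have hcr : ∀ m : ℕ, ((2:ℝ) ^ m)⁻¹ * ((2:ℝ) ^ m) ^ p = r ^ m := by
    intro m
    have h1 : ((2:ℝ) ^ m : ℝ) = (2:ℝ) ^ (m : ℝ) := (Real.rpow_natCast 2 m).symm
    have e1 : r ^ m = (2:ℝ) ^ ((p - 1) * (m:ℝ)) := by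
      rw [← Real.rpow_natCast r m, hr_def, ← Real.rpow_mul (by norm_num)]
    have e2 : ((2:ℝ) ^ m) ^ p = (2:ℝ) ^ ((m:ℝ) * p) := by
      rw [h1, ← Real.rpow_mul (by norm_num)]
    have e3 : ((2:ℝ) ^ m)⁻¹ = (2:ℝ) ^ (-(m:ℝ)) := by
      rw [h1, ← Real.rpow_neg (by norm_num)]
    rw [e1, e2, e3, ← Real.rpow_add (by norm_num : (0:ℝ) < 2)]
    ring_nf
  -- step estimate
  have hstep : ∀ (a : A) (m : ℕ),
      dist (u a m) (u a (m + 1)) ≤ (ε * ‖a‖ ^ p) * r ^ m := by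
    intro a m
    set b : A := (2 ^ m : ℕ) • a with hb
    have hsucc : ((2 ^ (m+1) : ℕ) • a) = b + b := by
      rw [hb, ← add_smul]
      congr 1
      omega
    have hdiff : u a m - u a (m + 1) =
        ((2:ℝ) ^ (m+1))⁻¹ • ((2:ℝ) • f b - f (b + b)) := by
      rw [hu_def]
      simp only [hsucc]
      rw [smul_sub, smul_smul, pow_succ]
      congr 1
      rw [← hb]
      congr 1
      field_simp
    have hkey : ‖(2:ℝ) • f b - f (b + b)‖ ≤ ε * (2 * ‖b‖ ^ p) := by
      have := hadd b b
      have h2 : (2:ℝ) • f b = f b + f b := by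
        rw [two_smul]
      calc ‖(2:ℝ) • f b - f (b + b)‖ = ‖f (b + b) - f b - f b‖ := by
            rw [h2, ← norm_neg]; congr 1; abel
        _ ≤ ε * (‖b‖ ^ p + ‖b‖ ^ p) := this
        _ = ε * (2 * ‖b‖ ^ p) := by ring
    have hbp : ‖b‖ ^ p = ((2:ℝ) ^ m) ^ p * ‖a‖ ^ p := hnormp a m
    rw [dist_eq_norm, hdiff, norm_smul, norm_inv, norm_pow, Real.norm_two]
    calc ((2:ℝ) ^ (m+1))⁻¹ * ‖(2:ℝ) • f b - f (b + b)‖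
        ≤ ((2:ℝ) ^ (m+1))⁻¹ * (ε * (2 * ‖b‖ ^ p)) := by
          apply mul_le_mul_of_nonneg_left hkey
          positivity
      _ = ε * (((2:ℝ) ^ m)⁻¹ * ((2:ℝ) ^ m) ^ p * ‖a‖ ^ p) := by
          rw [hbp, pow_succ]
          field_simp
      _ = (ε * ‖a‖ ^ p) * r ^ m := by rw [hcr]; ring
  -- existence of limits with the bound
  have key : ∀ a : A, ∃ L : X, Tendsto (u a) atTop (𝓝 L) ∧
      ‖f a - L‖ ≤ 2 * ε / (2 - 2 ^ p) * ‖a‖ ^ p := by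
    intro a
    have hcauchy : CauchySeq (u a) :=
      cauchySeq_of_le_geometric r (ε * ‖a‖ ^ p) hr1 (hstep a)
    obtain ⟨L, hL⟩ := cauchySeq_tendsto_of_complete hcauchy
    refine ⟨L, hL, ?_⟩
    have h0 : u a 0 = f a := by simp [hu_def]
    have := dist_le_of_le_geometric_of_tendsto₀ r (ε * ‖a‖ ^ p) hr1 (hstep a) hL
    rw [h0, dist_eq_norm] at this
    have h1r : 1 - r = (2 - 2 ^ p) / 2 := by
      rw [hr_def, Real.rpow_sub (by norm_num : (0:ℝ) < 2), Real.rpow_one]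
      ring
    calc ‖f a - L‖ ≤ ε * ‖a‖ ^ p / (1 - r) := this
      _ = 2 * ε / (2 - 2 ^ p) * ‖a‖ ^ p := by
          rw [h1r]
          field_simp
  choose D hD hDbound using key
  -- additivity
  have hDadd : ∀ a b : A, D (a + b) = D a + D b := by
    intro a b
    have hsplit : ∀ m : ℕ, (2 ^ m : ℕ) • (a + b) = (2 ^ m : ℕ) • a + (2 ^ m : ℕ) • b :=
      fun m => smul_add _ a b
    have hbound : ∀ m : ℕ, ‖u (a + b) m - (u a m + u b m)‖ ≤
        ε * (‖a‖ ^ p + ‖b‖ ^ p) * r ^ m := by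
      intro m
      have heq : u (a + b) m - (u a m + u b m) =
          ((2:ℝ) ^ m)⁻¹ • (f ((2 ^ m : ℕ) • a + (2 ^ m : ℕ) • b)
            - f ((2 ^ m : ℕ) • a) - f ((2 ^ m : ℕ) • b)) := by
        rw [hu_def]
        simp only [hsplit m, smul_sub]
        abel
      rw [heq, norm_smul, norm_inv, norm_pow, Real.norm_two]
      calc ((2:ℝ) ^ m)⁻¹ * ‖_‖
          ≤ ((2:ℝ) ^ m)⁻¹ * (ε * (‖(2 ^ m : ℕ) • a‖ ^ p + ‖(2 ^ m : ℕ) • b‖ ^ p)) := by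
            apply mul_le_mul_of_nonneg_left (hadd _ _)
            positivity
        _ = ε * (‖a‖ ^ p + ‖b‖ ^ p) * (((2:ℝ) ^ m)⁻¹ * ((2:ℝ) ^ m) ^ p) := by
            rw [hnormp a m, hnormp b m]
            ring
        _ = ε * (‖a‖ ^ p + ‖b‖ ^ p) * r ^ m := by rw [hcr]
    have htend0 : Tendsto (fun m => u (a + b) m - (u a m + u b m)) atTop (𝓝 0) := by
      apply squeeze_zero_norm hbound
      have : Tendsto (fun m : ℕ => r ^ m) atTop (𝓝 0) :=
        tendsto_pow_atTop_nhds_zero_of_lt_one (le_of_lt hr0) hr1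
      have := this.const_mul (ε * (‖a‖ ^ p + ‖b‖ ^ p))
      simpa using this
    have htend : Tendsto (u (a + b)) atTop (𝓝 (D a + D b)) := by
      have hsum : Tendsto (fun m => u a m + u b m) atTop (𝓝 (D a + D b)) :=
        (hD a).add (hD b)
      have := htend0.add hsum
      simp only [sub_add_cancel, zero_add] at this
      exact this
    exact tendsto_nhds_unique (hD (a + b)) htend
  refine ⟨D, hD, hDadd, hDbound, ?_⟩
  -- uniqueness
  intro g hgadd hgbound
  have hg0 : g 0 = 0 := by
    have := hgadd 0 0
    simp at this
    exact this
  have hgsmul : ∀ (n : ℕ) (a : A), g (n • a) = n • g a := by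
    intro n
    induction n with
    | zero => intro a; simpa using hg0
    | succ k ih =>
        intro a
        rw [succ_nsmul, hgadd, ih, succ_nsmul]
  have hD0 : D 0 = 0 := by
    have := hDadd 0 0
    simp at this
    exact this
  have hDsmul : ∀ (n : ℕ) (a : A), D (n • a) = n • D a := by
    intro n
    induction n with
    | zero => intro a; simpa using hD0
    | succ k ih =>
        intro a
        rw [succ_nsmul, hDadd, ih, succ_nsmul]
  funext a
  have hbound : ∀ m : ℕ, ‖g a - D a‖ ≤
      2 * (2 * ε / (2 - 2 ^ p)) * ‖a‖ ^ p * r ^ m := by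
    intro m
    set K : ℝ := 2 * ε / (2 - 2 ^ p) with hK
    have hKnn : 0 ≤ K := by positivity
    have hscale : ((2:ℝ) ^ m) • (g a - D a) = g ((2 ^ m : ℕ) • a) - D ((2 ^ m : ℕ) • a) := by
      rw [hgsmul, hDsmul, ← Nat.cast_smul_eq_nsmul ℝ (2 ^ m : ℕ) (g a),
        ← Nat.cast_smul_eq_nsmul ℝ (2 ^ m : ℕ) (D a)]
      push_cast
      rw [smul_sub]
    have h1 : ((2:ℝ) ^ m) * ‖g a - D a‖ =
        ‖g ((2 ^ m : ℕ) • a) - D ((2 ^ m : ℕ) • a)‖ := by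
      rw [← hscale, norm_smul]
      simp [abs_of_pos (hc m)]
    have h2 : ‖g ((2 ^ m : ℕ) • a) - D ((2 ^ m : ℕ) • a)‖ ≤
        2 * K * ‖((2 ^ m : ℕ) • a)‖ ^ p := by
      calc ‖g ((2 ^ m : ℕ) • a) - D ((2 ^ m : ℕ) • a)‖
          ≤ ‖f ((2 ^ m : ℕ) • a) - g ((2 ^ m : ℕ) • a)‖ +
            ‖f ((2 ^ m : ℕ) • a) - D ((2 ^ m : ℕ) • a)‖ := by
            rw [← norm_neg (f _ - g _)]
            have : g ((2 ^ m : ℕ) • a) - D ((2 ^ m : ℕ) • a) =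
                -(f ((2 ^ m : ℕ) • a) - g ((2 ^ m : ℕ) • a)) +
                (f ((2 ^ m : ℕ) • a) - D ((2 ^ m : ℕ) • a)) := by abel
            rw [this]
            exact norm_add_le _ _
        _ ≤ K * ‖((2 ^ m : ℕ) • a)‖ ^ p + K * ‖((2 ^ m : ℕ) • a)‖ ^ p :=
            add_le_add (hgbound _) (hDbound _)
        _ = 2 * K * ‖((2 ^ m : ℕ) • a)‖ ^ p := by ring
    have h3 : ‖g a - D a‖ = ((2:ℝ) ^ m)⁻¹ *
        ‖g ((2 ^ m : ℕ) • a) - D ((2 ^ m : ℕ) • a)‖ := by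
      rw [← h1]
      field_simp
    rw [h3]
    calc ((2:ℝ) ^ m)⁻¹ * ‖g ((2 ^ m : ℕ) • a) - D ((2 ^ m : ℕ) • a)‖
        ≤ ((2:ℝ) ^ m)⁻¹ * (2 * K * ‖((2 ^ m : ℕ) • a)‖ ^ p) := by
          apply mul_le_mul_of_nonneg_left h2
          positivity
      _ = 2 * K * ‖a‖ ^ p * (((2:ℝ) ^ m)⁻¹ * ((2:ℝ) ^ m) ^ p) := by
          rw [hnormp a m]; ring
      _ = 2 * K * ‖a‖ ^ p * r ^ m := by rw [hcr]
  have htend : Tendsto (fun m : ℕ => 2 * (2 * ε / (2 - 2 ^ p)) * ‖a‖ ^ p * r ^ m)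
      atTop (𝓝 0) := by
    have : Tendsto (fun m : ℕ => r ^ m) atTop (𝓝 0) :=
      tendsto_pow_atTop_nhds_zero_of_lt_one (le_of_lt hr0) hr1
    have := this.const_mul (2 * (2 * ε / (2 - 2 ^ p)) * ‖a‖ ^ p)
    simpa [mul_comm] using this
  have : ‖g a - D a‖ ≤ 0 :=
    ge_of_tendsto htend (Eventually.of_forall hbound)
  have : g a - D a = 0 := by
    rw [← norm_le_zero_iff]
    exact this
  exact sub_eq_zero.mp this
end
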